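/- arXiv:2303.16599 — 6 statements merged into one kernel-verified Lean document; each statement's English description precedes it below -/
import Mathlib

section
/- Let d ∈ (0, 1/2) and h be a positive integer. Then the series Σ_{l=0}^∞ ((h+l)^d − l^d)^2 converges, and there is a constant C(d) such that Σ_{l=0}^∞ ((h+l)^d − l^d)^2 ≤ C(d) · h^{2d+1} for all h ≥ 1. -/
open Real Finset

section
variable {d : ℝ}

/-- Bernoulli for exponents in [-1,0]. -/
lemma bern_neg {s p : ℝ} (hs : -1 < s) (hs0 : s ≤ 0) (hp : -1 ≤ p) (hp0 : p ≤ 0) :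
    1 + p * s ≤ (1 + s) ^ p := by
  have h1 : 0 < 1 + s := by linarith
  have hps : p * s ≤ 1 := by nlinarith
  have hps' : -1 < p * s := by nlinarith
  have hb : (1 + s) ^ (-p) ≤ 1 + (-p) * s :=
    rpow_one_add_le_one_add_mul_self (by linarith) (by linarith) (by linarith)
  have hpos : 0 < 1 + (-p) * s := by nlinarith
  have hpow : (1 + s) ^ p = ((1 + s) ^ (-p))⁻¹ := by
    rw [← Real.rpow_neg h1.le, neg_neg]
  rw [hpow]
  have hinv : 0 < (1 + (-p) * s)⁻¹ := inv_pos.mpr hpos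
  have hcan : (1 + (-p) * s) * (1 + (-p) * s)⁻¹ = 1 := mul_inv_cancel₀ hpos.ne'
  have h2 : (1 + p * s) * (1 + (-p) * s) ≤ 1 := by nlinarith [sq_nonneg (p * s)]
  have h3 : 1 + p * s ≤ (1 + (-p) * s)⁻¹ := by nlinarith
  exact h3.trans (inv_anti₀ (rpow_pos_of_pos h1 (-p)) hb)

/-- Concavity bound. -/
lemma mvt_upper (hd0 : 0 ≤ d) (hd1 : d ≤ 1) {x t : ℝ} (hx : 1 ≤ x) (ht : 0 ≤ t) :
    (t + x) ^ d - x ^ d ≤ d * t * x ^ (d - 1) := by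
  have hx0 : 0 < x := lt_of_lt_of_le one_pos hx
  have h1 : t + x = x * (1 + t / x) := by field_simp; ring
  have h2 : (0:ℝ) ≤ 1 + t / x := by positivity
  have h3 : (t + x) ^ d = x ^ d * (1 + t / x) ^ d := by
    rw [h1, Real.mul_rpow hx0.le h2]
  have h4 : (1 + t / x) ^ d ≤ 1 + d * (t / x) :=
    rpow_one_add_le_one_add_mul_self (le_trans (by norm_num : (-1:ℝ) ≤ 0) (by positivity)) hd0 hd1
  have h5 : x ^ (d - 1) = x ^ d / x := by
    rw [Real.rpow_sub hx0, Real.rpow_one]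
  have hxd : 0 < x ^ d := rpow_pos_of_pos hx0 d
  rw [h3, h5]
  have key : x ^ d * (1 + d * (t / x)) = x ^ d + d * t * (x ^ d / x) := by
    field_simp
  linarith [mul_le_mul_of_nonneg_left h4 hxd.le, key]

/-- Telescoping step. -/
lemma tel_step {e : ℝ} (he : -1 ≤ e) (he0 : e ≤ 0) {a : ℝ} (ha : 1 ≤ a) :
    (-e) * (a + 1) ^ (e - 1) ≤ a ^ e - (a + 1) ^ e := by
  have hb : (0:ℝ) < a + 1 := by linarith
  set s : ℝ := -(1 / (a + 1)) with hs_def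
  have hs : -1 < s := by
    rw [hs_def, neg_lt, neg_neg]
    rw [div_lt_iff₀ hb]; linarith
  have hs0 : s ≤ 0 := by rw [hs_def]; exact neg_nonpos.mpr (by positivity)
  have h1 : a = (a + 1) * (1 + s) := by
    rw [hs_def]; field_simp; ring
  have h2 : (0:ℝ) ≤ 1 + s := by linarith
  have h3 : a ^ e = (a + 1) ^ e * (1 + s) ^ e := by
    rw [h1, Real.mul_rpow hb.le h2]
    congr 2
    · linarith [h1]
  have h4 : 1 + e * s ≤ (1 + s) ^ e := bern_neg hs hs0 he he0
  have hbe : 0 < (a + 1) ^ e := rpow_pos_of_pos hb e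
  have h5 : (a + 1) ^ (e - 1) = (a + 1) ^ e / (a + 1) := by
    rw [Real.rpow_sub hb, Real.rpow_one]
  have h6 : (a + 1) ^ e * (1 + e * s) = (a + 1) ^ e + (-e) * ((a + 1) ^ e / (a + 1)) := by
    rw [hs_def]; field_simp
  clear_value s
  rw [h3, h5]
  linarith [mul_le_mul_of_nonneg_left h4 hbe.le, h6]

end

theorem stmt5 (d : ℝ) (hd : 0 < d) (hd2 : d < 1 / 2) :
    ∃ C : ℝ, 0 ≤ C ∧ ∀ h : ℕ, 1 ≤ h →
      Summable (fun l : ℕ => (((h : ℝ) + (l : ℝ)) ^ d - (l : ℝ) ^ d) ^ 2) ∧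
      ∑' l : ℕ, (((h : ℝ) + (l : ℝ)) ^ d - (l : ℝ) ^ d) ^ 2 ≤ C * (h : ℝ) ^ (2 * d + 1) := by
  have hd1 : d ≤ 1 := by linarith
  have h12 : 0 < 1 - 2 * d := by linarith
  refine ⟨2 * 2 ^ (2 * d) + d ^ 2 / (1 - 2 * d), by positivity, ?_⟩
  intro h hh
  have hh1 : (1:ℝ) ≤ (h:ℝ) := by exact_mod_cast hh
  have hhpos : (0:ℝ) < (h:ℝ) := by linarith
  set f : ℕ → ℝ := fun l => (((h : ℝ) + (l : ℝ)) ^ d - (l : ℝ) ^ d) ^ 2 with hf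
  have hfnn : ∀ l, 0 ≤ f l := fun l => sq_nonneg _
  -- per-term bound for l ≥ 1
  have key : ∀ l : ℕ, 1 ≤ l → f l ≤ d ^ 2 * (h:ℝ) ^ 2 * (l:ℝ) ^ (2 * d - 2) := by
    intro l hl
    have hl1 : (1:ℝ) ≤ (l:ℝ) := by exact_mod_cast hl
    have hl0 : (0:ℝ) < (l:ℝ) := by linarith
    have hb := mvt_upper hd.le hd1 hl1 hhpos.le
    have hge : (0:ℝ) ≤ ((h:ℝ) + (l:ℝ)) ^ d - (l:ℝ) ^ d := by
      have := Real.rpow_le_rpow hl0.le (by linarith : (l:ℝ) ≤ (h:ℝ) + (l:ℝ)) hd.le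
      linarith
    have hsq : f l ≤ (d * (h:ℝ) * (l:ℝ) ^ (d - 1)) ^ 2 := by
      rw [hf]
      exact pow_le_pow_left₀ hge hb 2
    have hpow2 : ((l:ℝ) ^ (d - 1)) ^ 2 = (l:ℝ) ^ (2 * d - 2) := by
      rw [sq, ← Real.rpow_add hl0]; ring_nf
    calc f l ≤ (d * (h:ℝ) * (l:ℝ) ^ (d - 1)) ^ 2 := hsq
      _ = d ^ 2 * (h:ℝ) ^ 2 * ((l:ℝ) ^ (d - 1)) ^ 2 := by ring
      _ = d ^ 2 * (h:ℝ) ^ 2 * (l:ℝ) ^ (2 * d - 2) := by rw [hpow2]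
  -- summability of the comparison series
  have hcmp : Summable (fun l : ℕ => ((l:ℝ) + 1) ^ (2 * d - 2)) := by
    have h1 : Summable (fun l : ℕ => (l:ℝ) ^ (2 * d - 2)) :=
      Real.summable_nat_rpow.mpr (by linarith)
    have h2 := (summable_nat_add_iff 1).mpr h1
    refine h2.congr fun l => ?_
    push_cast
    ring_nf
  have hsumf : Summable f := by
    rw [← summable_nat_add_iff 1]
    refine Summable.of_nonneg_of_le (fun l => hfnn _) (fun l => ?_)
      (hcmp.mul_left (d ^ 2 * (h:ℝ) ^ 2))
    have hk := key (l + 1) (by omega)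
    calc f (l + 1) ≤ d ^ 2 * (h:ℝ) ^ 2 * ((l + 1 : ℕ):ℝ) ^ (2 * d - 2) := hk
      _ = d ^ 2 * (h:ℝ) ^ 2 * ((l:ℝ) + 1) ^ (2 * d - 2) := by push_cast; ring_nf
  refine ⟨hsumf, ?_⟩
  -- telescoping function
  set g : ℕ → ℝ := fun l => ((h:ℝ) + (l:ℝ)) ^ (2 * d - 1) with hg
  have hstep : ∀ l : ℕ, ((h:ℝ) + (l:ℝ) + 1) ^ (2 * d - 2)
      ≤ (g l - g (l + 1)) / (1 - 2 * d) := by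
    intro l
    have hl0 : (0:ℝ) ≤ (l:ℝ) := Nat.cast_nonneg l
    have ha : (1:ℝ) ≤ (h:ℝ) + (l:ℝ) := by linarith
    have ht := tel_step (e := 2 * d - 1) (by linarith) (by linarith) ha
    have e2 : 2 * d - 1 - 1 = 2 * d - 2 := by ring
    rw [e2] at ht
    rw [le_div_iff₀ h12]
    have e3 : g (l + 1) = ((h:ℝ) + (l:ℝ) + 1) ^ (2 * d - 1) := by
      simp only [hg]; push_cast; ring_nf
    have e4 : g l = ((h:ℝ) + (l:ℝ)) ^ (2 * d - 1) := by simp only [hg]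
    rw [e4, e3]
    linarith [ht]
  have tailT : ∑' l : ℕ, ((h:ℝ) + (l:ℝ) + 1) ^ (2 * d - 2)
      ≤ (h:ℝ) ^ (2 * d - 1) / (1 - 2 * d) := by
    apply Real.tsum_le_of_sum_range_le (fun n => by positivity)
    intro n
    have hg0 : g 0 = (h:ℝ) ^ (2 * d - 1) := by rw [hg]; norm_num
    have hgn : 0 ≤ g n := by rw [hg]; positivity
    calc ∑ l ∈ range n, ((h:ℝ) + (l:ℝ) + 1) ^ (2 * d - 2)
        ≤ ∑ l ∈ range n, (g l - g (l + 1)) / (1 - 2 * d) :=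
          Finset.sum_le_sum fun l _ => hstep l
      _ = (∑ l ∈ range n, (g l - g (l + 1))) / (1 - 2 * d) := by rw [Finset.sum_div]
      _ = (g 0 - g n) / (1 - 2 * d) := by rw [Finset.sum_range_sub']
      _ ≤ g 0 / (1 - 2 * d) := by gcongr; linarith
      _ = (h:ℝ) ^ (2 * d - 1) / (1 - 2 * d) := by rw [hg0]
  -- summability of the shifted comparison series
  have hGsum : Summable (fun l : ℕ => ((h:ℝ) + (l:ℝ) + 1) ^ (2 * d - 2)) := by
    refine Summable.of_nonneg_of_le (fun l => by positivity) (fun l => ?_) hcmp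
    refine Real.rpow_le_rpow_of_nonpos (by positivity) ?_ (by linarith)
    have : (0:ℝ) ≤ (h:ℝ) := hhpos.le
    linarith
  have htail_sum : Summable (fun l : ℕ => f (l + (h + 1))) :=
    (summable_nat_add_iff (h + 1)).mpr hsumf
  -- tail bound
  have tail : ∑' l : ℕ, f (l + (h + 1))
      ≤ d ^ 2 * (h:ℝ) ^ 2 * ((h:ℝ) ^ (2 * d - 1) / (1 - 2 * d)) := by
    have h1 : ∑' l : ℕ, f (l + (h + 1))
        ≤ ∑' l : ℕ, d ^ 2 * (h:ℝ) ^ 2 * ((h:ℝ) + (l:ℝ) + 1) ^ (2 * d - 2) := by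
      refine Summable.tsum_le_tsum (fun l => ?_) htail_sum (hGsum.mul_left _)
      have hk := key (l + (h + 1)) (by omega)
      have e : ((l + (h + 1) : ℕ):ℝ) = (h:ℝ) + (l:ℝ) + 1 := by push_cast; ring
      rwa [e] at hk
    rw [tsum_mul_left] at h1
    refine h1.trans ?_
    exact mul_le_mul_of_nonneg_left tailT (by positivity)
  -- head bound
  have head : ∑ l ∈ range (h + 1), f l ≤ ((h:ℝ) + 1) * (2 ^ (2 * d) * (h:ℝ) ^ (2 * d)) := by
    have bound : ∀ l ∈ range (h + 1), f l ≤ 2 ^ (2 * d) * (h:ℝ) ^ (2 * d) := by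
      intro l hl
      have hlh : (l:ℝ) ≤ (h:ℝ) := by
        exact_mod_cast Nat.lt_succ_iff.mp (Finset.mem_range.mp hl)
      have hl0 : (0:ℝ) ≤ (l:ℝ) := Nat.cast_nonneg l
      have hA : ((h:ℝ) + (l:ℝ)) ^ d ≤ ((2:ℝ) * (h:ℝ)) ^ d :=
        Real.rpow_le_rpow (by positivity) (by linarith) hd.le
      have hBnn : 0 ≤ (l:ℝ) ^ d := Real.rpow_nonneg hl0 d
      have hge : (0:ℝ) ≤ ((h:ℝ) + (l:ℝ)) ^ d - (l:ℝ) ^ d := by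
        have := Real.rpow_le_rpow hl0 (by linarith : (l:ℝ) ≤ (h:ℝ) + (l:ℝ)) hd.le
        linarith
      have h1 : f l ≤ (((2:ℝ) * (h:ℝ)) ^ d) ^ 2 := by
        rw [hf]
        exact pow_le_pow_left₀ hge (by linarith) 2
      have h2 : (((2:ℝ) * (h:ℝ)) ^ d) ^ 2 = ((2:ℝ) * (h:ℝ)) ^ (2 * d) := by
        rw [sq, ← Real.rpow_add (by positivity)]; ring_nf
      have h3 : ((2:ℝ) * (h:ℝ)) ^ (2 * d) = 2 ^ (2 * d) * (h:ℝ) ^ (2 * d) :=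
        Real.mul_rpow (by norm_num) hhpos.le
      rw [h2, h3] at h1
      exact h1
    calc ∑ l ∈ range (h + 1), f l
        ≤ ∑ _l ∈ range (h + 1), 2 ^ (2 * d) * (h:ℝ) ^ (2 * d) := Finset.sum_le_sum bound
      _ = ((h + 1 : ℕ):ℝ) * (2 ^ (2 * d) * (h:ℝ) ^ (2 * d)) := by
          rw [Finset.sum_const, Finset.card_range, nsmul_eq_mul]
      _ = ((h:ℝ) + 1) * (2 ^ (2 * d) * (h:ℝ) ^ (2 * d)) := by push_cast; ring
  -- combine
  have hsplit := Summable.sum_add_tsum_nat_add (f := f) (h + 1) hsumf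
  have hp1 : (h:ℝ) ^ (2 * d) * (h:ℝ) = (h:ℝ) ^ (2 * d + 1) := by
    rw [Real.rpow_add hhpos, Real.rpow_one]
  have hp2 : (h:ℝ) ^ 2 * (h:ℝ) ^ (2 * d - 1) = (h:ℝ) ^ (2 * d + 1) := by
    have e : (h:ℝ) ^ (2:ℕ) = (h:ℝ) ^ ((2:ℕ):ℝ) := (Real.rpow_natCast _ 2).symm
    rw [e, ← Real.rpow_add hhpos]
    congr 1
    push_cast
    ring
  have hp3 : (h:ℝ) ^ 2 * (h:ℝ) ^ (2 * d - 1) = (h:ℝ) ^ (2 * d) * (h:ℝ) := hp2.trans hp1.symm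
  have e4 : d ^ 2 * (h:ℝ) ^ 2 * ((h:ℝ) ^ (2 * d - 1) / (1 - 2 * d))
      = d ^ 2 / (1 - 2 * d) * ((h:ℝ) ^ (2 * d) * (h:ℝ)) := by
    rw [← hp3]; field_simp
  calc (∑' l : ℕ, f l)
      = (∑ l ∈ range (h + 1), f l) + ∑' l : ℕ, f (l + (h + 1)) := hsplit.symm
    _ ≤ ((h:ℝ) + 1) * (2 ^ (2 * d) * (h:ℝ) ^ (2 * d))
        + d ^ 2 * (h:ℝ) ^ 2 * ((h:ℝ) ^ (2 * d - 1) / (1 - 2 * d)) := add_le_add head tail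
    _ = ((h:ℝ) + 1) * (2 ^ (2 * d) * (h:ℝ) ^ (2 * d))
        + d ^ 2 / (1 - 2 * d) * ((h:ℝ) ^ (2 * d) * (h:ℝ)) := by rw [e4]
    _ ≤ 2 * (h:ℝ) * (2 ^ (2 * d) * (h:ℝ) ^ (2 * d))
        + d ^ 2 / (1 - 2 * d) * ((h:ℝ) ^ (2 * d) * (h:ℝ)) := by
        have hmul := mul_le_mul_of_nonneg_right
          (by linarith : (h:ℝ) + 1 ≤ 2 * (h:ℝ))
          (by positivity : (0:ℝ) ≤ 2 ^ (2 * d) * (h:ℝ) ^ (2 * d))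
        linarith
    _ = (2 * 2 ^ (2 * d) + d ^ 2 / (1 - 2 * d)) * ((h:ℝ) ^ (2 * d) * (h:ℝ)) := by ring
    _ = (2 * 2 ^ (2 * d) + d ^ 2 / (1 - 2 * d)) * (h:ℝ) ^ (2 * d + 1) := by rw [hp1]
end

section
/- Let d_n = c/log n for a constant c > 0 and α₁ ∈ (0,1), and let h = h_n = ⌊n^{α₁}⌋. Then h^{−1} Σ_{l=1}^{h} l^{2 d_n} → e^{2 c α₁} as n → ∞. -/
open Filter

lemma ratio_lemma (α : ℝ) (h0 : 0 < α) :
    Tendsto (fun n : ℕ => Real.log (⌊(n : ℝ) ^ α⌋₊ : ℝ) / Real.log n) atTop (nhds α) := by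
  have hx : Tendsto (fun n : ℕ => (n : ℝ) ^ α) atTop atTop :=
    (tendsto_rpow_atTop h0).comp tendsto_natCast_atTop_atTop
  have hlog : Tendsto (fun n : ℕ => Real.log n) atTop atTop :=
    Real.tendsto_log_atTop.comp tendsto_natCast_atTop_atTop
  have hlo : Tendsto (fun n : ℕ => α - Real.log 2 / Real.log n) atTop (nhds α) := by
    have : Tendsto (fun n : ℕ => Real.log 2 / Real.log n) atTop (nhds 0) :=
      tendsto_const_nhds.div_atTop hlog
    simpa using tendsto_const_nhds.sub this
  apply tendsto_of_tendsto_of_tendsto_of_le_of_le' hlo tendsto_const_nhds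
  · filter_upwards [hx.eventually_ge_atTop 2, hlog.eventually_gt_atTop 0,
      eventually_ge_atTop 1] with n h2 hln hn1
    have hn0 : (0:ℝ) < (n:ℝ) := by exact_mod_cast hn1
    have hx0 : (0:ℝ) < (n : ℝ) ^ α := lt_of_lt_of_le (by norm_num) h2
    have hm : ((n:ℝ)^α) / 2 ≤ (⌊(n : ℝ) ^ α⌋₊ : ℝ) := by
      have := Nat.sub_one_lt_floor ((n:ℝ)^α)
      nlinarith [this]
    have hm0 : (0:ℝ) < ((n:ℝ)^α) / 2 := by linarith
    have h1 : Real.log (((n:ℝ)^α) / 2) ≤ Real.log (⌊(n : ℝ) ^ α⌋₊ : ℝ) :=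
      Real.log_le_log hm0 hm
    have h2' : Real.log (((n:ℝ)^α) / 2) = α * Real.log n - Real.log 2 := by
      rw [Real.log_div (ne_of_gt hx0) (by norm_num), Real.log_rpow hn0]
    rw [le_div_iff₀ hln]
    have : (α - Real.log 2 / Real.log n) * Real.log n = α * Real.log n - Real.log 2 := by
      field_simp
    linarith
  · filter_upwards [hx.eventually_ge_atTop 2, hlog.eventually_gt_atTop 0,
      eventually_ge_atTop 1] with n h2 hln hn1
    have hn0 : (0:ℝ) < (n:ℝ) := by exact_mod_cast hn1
    have hx0 : (0:ℝ) < (n : ℝ) ^ α := lt_of_lt_of_le (by norm_num) h2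
    have hfle : (⌊(n : ℝ) ^ α⌋₊ : ℝ) ≤ (n:ℝ)^α := Nat.floor_le (le_of_lt hx0)
    have hf0 : (0:ℝ) < (⌊(n : ℝ) ^ α⌋₊ : ℝ) := by
      have : 1 ≤ ⌊(n : ℝ) ^ α⌋₊ := Nat.le_floor (by exact_mod_cast le_trans (by norm_num) h2)
      exact_mod_cast Nat.lt_of_lt_of_le Nat.zero_lt_one this
    have : Real.log (⌊(n : ℝ) ^ α⌋₊ : ℝ) ≤ α * Real.log n := by
      calc Real.log (⌊(n : ℝ) ^ α⌋₊ : ℝ) ≤ Real.log ((n:ℝ)^α) := Real.log_le_log hf0 hfle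
        _ = α * Real.log n := Real.log_rpow hn0 α
    rw [div_le_iff₀ hln]
    linarith

lemma aux_rpow (c α : ℝ) (h0 : 0 < α) :
    Tendsto (fun n : ℕ => ((⌊(n : ℝ) ^ α⌋₊ : ℝ)) ^ (2 * (c / Real.log n))) atTop
      (nhds (Real.exp (2 * c * α))) := by
  have hx : Tendsto (fun n : ℕ => (n : ℝ) ^ α) atTop atTop :=
    (tendsto_rpow_atTop h0).comp tendsto_natCast_atTop_atTop
  have hr := ratio_lemma α h0
  have h1 : Tendsto (fun n : ℕ =>
      Real.exp (2 * c * (Real.log (⌊(n : ℝ) ^ α⌋₊ : ℝ) / Real.log n))) atTop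
      (nhds (Real.exp (2 * c * α))) :=
    (Real.continuous_exp.tendsto _).comp (hr.const_mul (2 * c))
  apply h1.congr'
  filter_upwards [hx.eventually_ge_atTop 2] with n h2
  have hf0 : (0:ℝ) < (⌊(n : ℝ) ^ α⌋₊ : ℝ) := by
    have : 1 ≤ ⌊(n : ℝ) ^ α⌋₊ := Nat.le_floor (by exact_mod_cast le_trans (by norm_num) h2)
    exact_mod_cast Nat.lt_of_lt_of_le Nat.zero_lt_one this
  rw [Real.rpow_def_of_pos hf0]
  ring_nf

theorem stmt6 (c α₁ : ℝ) (hc : 0 < c) (hα : α₁ ∈ Set.Ioo (0 : ℝ) 1) :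
    Tendsto (fun n : ℕ =>
        ((⌊(n : ℝ) ^ α₁⌋₊ : ℝ))⁻¹ *
          ∑ l ∈ Finset.Icc 1 ⌊(n : ℝ) ^ α₁⌋₊, (l : ℝ) ^ (2 * (c / Real.log n)))
      atTop (nhds (Real.exp (2 * c * α₁))) := by
  obtain ⟨hα0, hα1⟩ := hα
  set t : ℕ → ℝ := fun n => 2 * (c / Real.log n) with ht
  have hx : Tendsto (fun n : ℕ => (n : ℝ) ^ α₁) atTop atTop :=
    (tendsto_rpow_atTop hα0).comp tendsto_natCast_atTop_atTop
  have hlog : Tendsto (fun n : ℕ => Real.log n) atTop atTop :=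
    Real.tendsto_log_atTop.comp tendsto_natCast_atTop_atTop
  have ht0 : Tendsto t atTop (nhds 0) := by
    have : Tendsto (fun n : ℕ => c / Real.log n) atTop (nhds 0) :=
      tendsto_const_nhds.div_atTop hlog
    simpa using this.const_mul 2
  have hA := aux_rpow c α₁ hα0
  -- lower bound limit
  have hlow : Tendsto (fun n : ℕ =>
      ((⌊(n : ℝ) ^ α₁⌋₊ : ℝ)) ^ (t n) / (1 + t n)) atTop (nhds (Real.exp (2 * c * α₁))) := by
    have h1t : Tendsto (fun n : ℕ => 1 + t n) atTop (nhds 1) := by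
      simpa using tendsto_const_nhds.add ht0
    have := hA.div h1t (by norm_num); rw [div_one] at this; exact this
  apply tendsto_of_tendsto_of_tendsto_of_le_of_le' hlow hA
  · -- lower bound
    filter_upwards [hx.eventually_ge_atTop 2, hlog.eventually_gt_atTop 0] with n h2 hln
    set h := ⌊(n : ℝ) ^ α₁⌋₊ with hh
    have hh1 : 1 ≤ h := Nat.le_floor (by exact_mod_cast le_trans (by norm_num) h2)
    have hf0 : (0:ℝ) < (h : ℝ) := by exact_mod_cast Nat.lt_of_lt_of_le Nat.zero_lt_one hh1
    have htn0 : 0 ≤ t n := by positivity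
    have hmono : MonotoneOn (fun x : ℝ => x ^ (t n)) (Set.Icc (0:ℝ) (0 + (h:ℝ))) := by
      intro a ha b hb hab
      exact Real.rpow_le_rpow ha.1 hab htn0
    show (h:ℝ) ^ (t n) / (1 + t n) ≤ (h:ℝ)⁻¹ * ∑ l ∈ Finset.Icc 1 h, (l : ℝ) ^ (t n)
    have hint := hmono.integral_le_sum
    rw [integral_rpow (Or.inl (by linarith))] at hint
    rw [Real.zero_rpow (by linarith : t n + 1 ≠ 0)] at hint
    simp only [zero_add, sub_zero] at hint
    have hsum : ∑ i ∈ Finset.range h, ((i + 1 : ℕ) : ℝ) ^ (t n)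
        = ∑ l ∈ Finset.Icc 1 h, (l : ℝ) ^ (t n) := by
      rw [← Finset.Ico_add_one_right_eq_Icc, Finset.sum_Ico_eq_sum_range]
      simp [add_comm]
    rw [hsum] at hint
    have hpow : (h:ℝ) ^ (t n + 1) = (h:ℝ) ^ (t n) * (h:ℝ) := by
      rw [Real.rpow_add hf0, Real.rpow_one]
    rw [hpow] at hint
    have h3 : (h:ℝ) ^ (t n) * (h:ℝ) ≤ (∑ l ∈ Finset.Icc 1 h, (l : ℝ) ^ (t n)) * (t n + 1) :=
      (div_le_iff₀ (by linarith : (0:ℝ) < t n + 1)).1 hint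
    rw [inv_mul_eq_div, div_le_div_iff₀ (by linarith : (0:ℝ) < 1 + t n) hf0]
    have h4 : (∑ l ∈ Finset.Icc 1 h, (l : ℝ) ^ (t n)) * (t n + 1)
        = (∑ l ∈ Finset.Icc 1 h, (l : ℝ) ^ (t n)) * (1 + t n) := by ring
    linarith
  · -- upper bound
    filter_upwards [hx.eventually_ge_atTop 2, hlog.eventually_gt_atTop 0] with n h2 hln
    set h := ⌊(n : ℝ) ^ α₁⌋₊ with hh
    have hh1 : 1 ≤ h := Nat.le_floor (by exact_mod_cast le_trans (by norm_num) h2)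
    have hf0 : (0:ℝ) < (h : ℝ) := by exact_mod_cast Nat.lt_of_lt_of_le Nat.zero_lt_one hh1
    have htn0 : 0 ≤ t n := by positivity
    show (h:ℝ)⁻¹ * (∑ l ∈ Finset.Icc 1 h, (l : ℝ) ^ (t n)) ≤ (h:ℝ) ^ (t n)
    have hsum : ∑ l ∈ Finset.Icc 1 h, (l : ℝ) ^ (t n) ≤ (h : ℝ) * (h:ℝ) ^ (t n) := by
      calc ∑ l ∈ Finset.Icc 1 h, (l : ℝ) ^ (t n)
          ≤ ∑ l ∈ Finset.Icc 1 h, (h : ℝ) ^ (t n) := by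
            apply Finset.sum_le_sum
            intro l hl
            exact Real.rpow_le_rpow (Nat.cast_nonneg l)
              (Nat.cast_le.2 (Finset.mem_Icc.1 hl).2) htn0
        _ = (h : ℝ) * (h:ℝ) ^ (t n) := by
            rw [Finset.sum_const, Nat.card_Icc]
            simp [nsmul_eq_mul]
    rw [inv_mul_le_iff₀ hf0]
    exact hsum.trans (by rw [mul_comm])
end

section
/- Let d_n = c/log n with c > 0, h = ⌊n^{α₁}⌋ with α₁ ∈ (0,1), and ψ_j = ψ_j(d_n) = Γ(j+d_n)/(Γ(d_n)Γ(j+1)). Then h^{−1} Σ_{l=0}^{h−1} (Σ_{j=0}^{l} ψ_j)^2 → e^{2 c α₁} as n → ∞. -/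
open Filter

/-- The fractional differencing coefficients `ψ_j(d) = Γ(j+d)/(Γ(d)Γ(j+1))`. -/
noncomputable def psi (d : ℝ) (j : ℕ) : ℝ :=
  Real.Gamma ((j : ℝ) + d) / (Real.Gamma d * Real.Gamma ((j : ℝ) + 1))

lemma sum_psi_eq (d : ℝ) (hd : 0 < d) (l : ℕ) :
    ∑ j ∈ Finset.range (l + 1), psi d j
      = Real.Gamma ((l : ℝ) + 1 + d) / (Real.Gamma (1 + d) * Real.Gamma ((l : ℝ) + 1)) := by
  induction l with
  | zero =>
    simp only [Finset.sum_range_one, psi, Nat.cast_zero, zero_add]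
    rw [Real.Gamma_one, mul_one, mul_one, div_self (Real.Gamma_pos_of_pos hd).ne',
      div_self (Real.Gamma_pos_of_pos (by linarith : (0:ℝ) < 1 + d)).ne']
  | succ l ih =>
    rw [Finset.sum_range_succ, ih]
    have hΓd : Real.Gamma d ≠ 0 := (Real.Gamma_pos_of_pos hd).ne'
    have hl1 : (0:ℝ) < (l:ℝ) + 1 := by positivity
    have hΓl1 : Real.Gamma ((l:ℝ) + 1) ≠ 0 := (Real.Gamma_pos_of_pos hl1).ne'
    have hΓ1d : Real.Gamma (1 + d) ≠ 0 := (Real.Gamma_pos_of_pos (by linarith)).ne'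
    have e1 : Real.Gamma ((l:ℝ) + 1 + 1 + d) = ((l:ℝ) + 1 + d) * Real.Gamma ((l:ℝ) + 1 + d) := by
      rw [show (l:ℝ) + 1 + 1 + d = ((l:ℝ) + 1 + d) + 1 by ring, Real.Gamma_add_one (by positivity)]
    have e2 : Real.Gamma ((l:ℝ) + 1 + 1) = ((l:ℝ) + 1) * Real.Gamma ((l:ℝ) + 1) := by
      rw [Real.Gamma_add_one hl1.ne']
    have e3 : Real.Gamma (1 + d) = d * Real.Gamma d := by
      rw [add_comm, Real.Gamma_add_one hd.ne']
    have hψ : psi d (l + 1)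
        = Real.Gamma ((l:ℝ) + 1 + d) / (Real.Gamma d * (((l:ℝ) + 1) * Real.Gamma ((l:ℝ) + 1))) := by
      simp only [psi, Nat.cast_add, Nat.cast_one]
      rw [e2]
    push_cast
    rw [hψ, e1, e2, e3]
    field_simp

/-- Upper Gamma bound from log-convexity: `Γ(x+d) ≤ Γ(x) * x^d`. -/
lemma gamma_upper {x d : ℝ} (hx : 1 ≤ x) (hd : 0 < d) (hd1 : d < 1) :
    Real.Gamma (x + d) ≤ Real.Gamma x * x ^ d := by
  have hx0 : (0:ℝ) < x := by linarith
  have h := Real.Gamma_mul_add_mul_le_rpow_Gamma_mul_rpow_Gamma (s := x) (t := x + 1)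
    hx0 (by linarith) (a := 1 - d) (b := d) (by linarith) hd (by ring)
  have harg : (1 - d) * x + d * (x + 1) = x + d := by ring
  rw [harg, Real.Gamma_add_one hx0.ne'] at h
  have hΓ : (0:ℝ) < Real.Gamma x := Real.Gamma_pos_of_pos hx0
  calc Real.Gamma (x + d) ≤ Real.Gamma x ^ (1 - d) * (x * Real.Gamma x) ^ d := h
    _ = Real.Gamma x * x ^ d := by
        rw [Real.mul_rpow hx0.le hΓ.le, show Real.Gamma x ^ (1-d) * (x ^ d * Real.Gamma x ^ d)
          = (Real.Gamma x ^ (1-d) * Real.Gamma x ^ d) * x ^ d by ring,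
          ← Real.rpow_add hΓ]
        norm_num

/-- Lower Gamma bound from log-convexity: `x * Γ(x) * (x+d)^(d-1) ≤ Γ(x+d)`. -/
lemma gamma_lower {x d : ℝ} (hx : 1 ≤ x) (hd : 0 < d) (hd1 : d < 1) :
    x * Real.Gamma x * (x + d) ^ (d - 1) ≤ Real.Gamma (x + d) := by
  have hx0 : (0:ℝ) < x := by linarith
  have hxd : (0:ℝ) < x + d := by linarith
  have hΓxd : (0:ℝ) < Real.Gamma (x + d) := Real.Gamma_pos_of_pos hxd
  have h := Real.Gamma_mul_add_mul_le_rpow_Gamma_mul_rpow_Gamma (s := x + d) (t := x + d + 1)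
    hxd (by linarith) (a := d) (b := 1 - d) hd (by linarith) (by ring)
  have harg : d * (x + d) + (1 - d) * (x + d + 1) = x + 1 := by ring
  rw [harg, Real.Gamma_add_one hx0.ne', Real.Gamma_add_one hxd.ne'] at h
  have key : x * Real.Gamma x ≤ Real.Gamma (x + d) * (x + d) ^ (1 - d) := by
    calc x * Real.Gamma x ≤ Real.Gamma (x+d) ^ d * ((x+d) * Real.Gamma (x+d)) ^ (1-d) := h
      _ = Real.Gamma (x + d) * (x + d) ^ (1 - d) := by
          rw [Real.mul_rpow hxd.le hΓxd.le, show Real.Gamma (x+d) ^ d * ((x+d) ^ (1-d)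
            * Real.Gamma (x+d) ^ (1-d)) = (Real.Gamma (x+d) ^ d * Real.Gamma (x+d) ^ (1-d))
            * (x+d) ^ (1-d) by ring, ← Real.rpow_add hΓxd]
          norm_num
  have hpow : (0:ℝ) < (x + d) ^ (1 - d) := Real.rpow_pos_of_pos hxd _
  rw [show d - 1 = -(1 - d) by ring, Real.rpow_neg hxd.le, ← div_eq_mul_inv,
    div_le_iff₀ hpow]
  exact key

lemma term_bounds {d : ℝ} (hd : 0 < d) (hd1 : d < 1) (l : ℕ) :
    ((l : ℝ) + 1) ^ d / ((1 + d) * Real.Gamma (1 + d))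
      ≤ ∑ j ∈ Finset.range (l + 1), psi d j ∧
    ∑ j ∈ Finset.range (l + 1), psi d j ≤ ((l : ℝ) + 1) ^ d / Real.Gamma (1 + d) := by
  have hx : (1:ℝ) ≤ (l : ℝ) + 1 := by
    have := Nat.cast_nonneg (α := ℝ) l; linarith
  have hx0 : (0:ℝ) < (l : ℝ) + 1 := by positivity
  have hG : (0:ℝ) < Real.Gamma (1 + d) := Real.Gamma_pos_of_pos (by linarith)
  have hΓx : (0:ℝ) < Real.Gamma ((l:ℝ) + 1) := Real.Gamma_pos_of_pos hx0
  rw [sum_psi_eq d hd l]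
  set x : ℝ := (l : ℝ) + 1 with hxdef
  constructor
  · -- lower bound
    have h1 : x * Real.Gamma x * (x + d) ^ (d - 1) ≤ Real.Gamma (x + d) :=
      gamma_lower hx hd hd1
    have h2 : x ^ d / (1 + d) ≤ x * (x + d) ^ (d - 1) := by
      have e : (x + d) ^ (d - 1) = (x + d) ^ d / (x + d) := by
        rw [Real.rpow_sub (by linarith), Real.rpow_one]
      rw [e]
      have h3 : x ^ d ≤ (x + d) ^ d :=
        Real.rpow_le_rpow hx0.le (by linarith) hd.le
      have h4 : x / (x + d) ≥ 1 / (1 + d) := by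
        rw [ge_iff_le, div_le_div_iff₀ (by linarith) (by linarith)]
        nlinarith
      calc x ^ d / (1 + d) = x ^ d * (1 / (1 + d)) := by ring
        _ ≤ (x + d) ^ d * (x / (x + d)) := by
            apply mul_le_mul h3 h4 (by positivity) (by positivity)
        _ = x * ((x + d) ^ d / (x + d)) := by ring
    rw [div_le_div_iff₀ (by positivity) (by positivity)]
    calc x ^ d * (Real.Gamma (1 + d) * Real.Gamma x)
        = (x ^ d / (1 + d)) * Real.Gamma x * ((1 + d) * Real.Gamma (1 + d)) := by
          field_simp
      _ ≤ (x * (x + d) ^ (d - 1)) * Real.Gamma x * ((1 + d) * Real.Gamma (1 + d)) := by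
          apply mul_le_mul_of_nonneg_right (mul_le_mul_of_nonneg_right h2 hΓx.le)
          positivity
      _ = (x * Real.Gamma x * (x + d) ^ (d - 1)) * ((1 + d) * Real.Gamma (1 + d)) := by ring
      _ ≤ Real.Gamma (x + d) * ((1 + d) * Real.Gamma (1 + d)) := by
          apply mul_le_mul_of_nonneg_right h1; positivity
  · -- upper bound
    have h1 : Real.Gamma (x + d) ≤ Real.Gamma x * x ^ d := gamma_upper hx hd hd1
    rw [div_le_div_iff₀ (by positivity) hG]
    calc Real.Gamma (x + d) * Real.Gamma (1 + d)
        ≤ Real.Gamma x * x ^ d * Real.Gamma (1 + d) := by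
          apply mul_le_mul_of_nonneg_right h1 hG.le
      _ = x ^ d * (Real.Gamma (1 + d) * Real.Gamma x) := by ring

lemma avg_sq_bounds {d : ℝ} (hd : 0 < d) (hd1 : d < 1) {h : ℕ} (hh : 1 ≤ h) :
    (h : ℝ) ^ (2 * d) / ((2 * d + 1) * ((1 + d) * Real.Gamma (1 + d)) ^ 2)
      ≤ (h : ℝ)⁻¹ * ∑ l ∈ Finset.range h, (∑ j ∈ Finset.range (l + 1), psi d j) ^ 2 ∧
    (h : ℝ)⁻¹ * ∑ l ∈ Finset.range h, (∑ j ∈ Finset.range (l + 1), psi d j) ^ 2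
      ≤ (h : ℝ) ^ (2 * d) / (Real.Gamma (1 + d)) ^ 2 := by
  have hG : (0:ℝ) < Real.Gamma (1 + d) := Real.Gamma_pos_of_pos (by linarith)
  have hh0 : (0:ℝ) < (h : ℝ) := by exact_mod_cast hh
  have hinv : (0:ℝ) ≤ (h : ℝ)⁻¹ := by positivity
  -- squared term bounds
  have hsq : ∀ l : ℕ,
      (((l : ℝ) + 1) ^ (2 * d)) / ((1 + d) * Real.Gamma (1 + d)) ^ 2
        ≤ (∑ j ∈ Finset.range (l + 1), psi d j) ^ 2 ∧
      (∑ j ∈ Finset.range (l + 1), psi d j) ^ 2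
        ≤ (((l : ℝ) + 1) ^ (2 * d)) / (Real.Gamma (1 + d)) ^ 2 := by
    intro l
    obtain ⟨hlo, hup⟩ := term_bounds hd hd1 l
    have hx0 : (0:ℝ) < (l : ℝ) + 1 := by positivity
    have hlo0 : (0:ℝ) ≤ ((l : ℝ) + 1) ^ d / ((1 + d) * Real.Gamma (1 + d)) := by positivity
    have hrpow : (((l : ℝ) + 1) ^ d) ^ 2 = ((l : ℝ) + 1) ^ (2 * d) := by
      rw [← Real.rpow_natCast (((l : ℝ) + 1) ^ d) 2, ← Real.rpow_mul hx0.le]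
      norm_num [mul_comm]
    constructor
    · calc (((l : ℝ) + 1) ^ (2 * d)) / ((1 + d) * Real.Gamma (1 + d)) ^ 2
          = (((l : ℝ) + 1) ^ d / ((1 + d) * Real.Gamma (1 + d))) ^ 2 := by
            rw [div_pow, hrpow]
        _ ≤ (∑ j ∈ Finset.range (l + 1), psi d j) ^ 2 := by
            apply pow_le_pow_left₀ hlo0 hlo
    · calc (∑ j ∈ Finset.range (l + 1), psi d j) ^ 2
          ≤ (((l : ℝ) + 1) ^ d / Real.Gamma (1 + d)) ^ 2 := by
            apply pow_le_pow_left₀ (le_trans hlo0 hlo) hup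
        _ = (((l : ℝ) + 1) ^ (2 * d)) / (Real.Gamma (1 + d)) ^ 2 := by
            rw [div_pow, hrpow]
  constructor
  · -- lower bound via integral comparison
    have hmono : MonotoneOn (fun x : ℝ => x ^ (2 * d)) (Set.Icc (0:ℝ) (0 + h)) := by
      intro x hx y hy hxy
      exact Real.rpow_le_rpow hx.1 hxy (by positivity)
    have hint := hmono.integral_le_sum
    have hI : (∫ x in (0:ℝ)..(0 + (h:ℕ)), x ^ (2 * d))
        = (h : ℝ) ^ (2 * d + 1) / (2 * d + 1) := by
      rw [integral_rpow (Or.inl (by linarith))]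
      rw [Real.zero_rpow (by positivity : 2 * d + 1 ≠ 0)]
      norm_num
    rw [hI] at hint
    have hsum1 : (h : ℝ) ^ (2 * d + 1) / (2 * d + 1)
        ≤ ∑ l ∈ Finset.range h, ((l : ℝ) + 1) ^ (2 * d) := by
      refine le_trans hint (le_of_eq (Finset.sum_congr rfl fun i _ => ?_))
      push_cast
      norm_num
    have hsum2 : ∑ l ∈ Finset.range h, ((l : ℝ) + 1) ^ (2 * d) / ((1 + d) * Real.Gamma (1 + d)) ^ 2
        ≤ ∑ l ∈ Finset.range h, (∑ j ∈ Finset.range (l + 1), psi d j) ^ 2 :=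
      Finset.sum_le_sum fun l _ => (hsq l).1
    rw [← Finset.sum_div] at hsum2
    have step : (h : ℝ) ^ (2 * d + 1) / (2 * d + 1) / ((1 + d) * Real.Gamma (1 + d)) ^ 2
        ≤ ∑ l ∈ Finset.range h, (∑ j ∈ Finset.range (l + 1), psi d j) ^ 2 := by
      refine le_trans ?_ hsum2
      apply div_le_div_of_nonneg_right hsum1 (by positivity) |>.trans_eq rfl
    have := mul_le_mul_of_nonneg_left step hinv
    refine le_trans (le_of_eq ?_) this
    rw [Real.rpow_add hh0, Real.rpow_one]
    field_simp
  · -- upper bound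
    have hsum : ∑ l ∈ Finset.range h, (∑ j ∈ Finset.range (l + 1), psi d j) ^ 2
        ≤ ∑ l ∈ Finset.range h, (h : ℝ) ^ (2 * d) / (Real.Gamma (1 + d)) ^ 2 := by
      refine Finset.sum_le_sum fun l hl => le_trans (hsq l).2 ?_
      apply div_le_div_of_nonneg_right _ (by positivity)
      apply Real.rpow_le_rpow (by positivity) _ (by positivity)
      have : (l : ℝ) + 1 ≤ (h : ℝ) := by
        have := Finset.mem_range.mp hl
        exact_mod_cast Nat.succ_le_of_lt this
      exact this
    rw [Finset.sum_const, Finset.card_range, nsmul_eq_mul] at hsum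
    have := mul_le_mul_of_nonneg_left hsum hinv
    refine le_trans this (le_of_eq ?_)
    field_simp

theorem stmt7 (c α₁ : ℝ) (hc : 0 < c) (hα : α₁ ∈ Set.Ioo (0 : ℝ) 1) :
    Tendsto (fun n : ℕ =>
        ((⌊(n : ℝ) ^ α₁⌋₊ : ℝ))⁻¹ *
          ∑ l ∈ Finset.range ⌊(n : ℝ) ^ α₁⌋₊,
            (∑ j ∈ Finset.range (l + 1), psi (c / Real.log n) j) ^ 2)
      atTop (nhds (Real.exp (2 * c * α₁))) := by
  obtain ⟨hα0, hα1⟩ := hα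
  have hlog : Tendsto (fun n : ℕ => Real.log n) atTop atTop :=
    Real.tendsto_log_atTop.comp tendsto_natCast_atTop_atTop
  have hd_lim : Tendsto (fun n : ℕ => c / Real.log n) atTop (nhds 0) :=
    tendsto_const_nhds.div_atTop hlog
  have hnr : Tendsto (fun n : ℕ => (n : ℝ) ^ α₁) atTop atTop :=
    (tendsto_rpow_atTop hα0).comp tendsto_natCast_atTop_atTop
  have hev : ∀ᶠ n : ℕ in atTop, c < Real.log n ∧ (2:ℝ) ≤ (n : ℝ) ^ α₁ ∧ 1 ≤ n :=
    (hlog.eventually_gt_atTop c).and ((hnr.eventually_ge_atTop 2).and (eventually_ge_atTop 1))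
  -- basic consequences
  have hfacts : ∀ n : ℕ, c < Real.log n → (2:ℝ) ≤ (n : ℝ) ^ α₁ → 1 ≤ n →
      0 < c / Real.log n ∧ c / Real.log n < 1 ∧ 1 ≤ ⌊(n : ℝ) ^ α₁⌋₊ := by
    intro n h1 h2 h3
    have hL : 0 < Real.log n := lt_trans hc h1
    refine ⟨div_pos hc hL, (div_lt_one hL).2 h1, Nat.le_floor ?_⟩
    push_cast; linarith
  -- the key exponent limit
  have hlow : Tendsto (fun n : ℕ => c * α₁ - c * Real.log 2 / Real.log n)
      atTop (nhds (c * α₁)) := by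
    have h1 : Tendsto (fun n : ℕ => c * Real.log 2 / Real.log n) atTop (nhds 0) :=
      tendsto_const_nhds.div_atTop hlog
    simpa using (tendsto_const_nhds (x := c * α₁)).sub h1
  have key : Tendsto (fun n : ℕ => c / Real.log n * Real.log (⌊(n : ℝ) ^ α₁⌋₊ : ℕ))
      atTop (nhds (c * α₁)) := by
    apply tendsto_of_tendsto_of_tendsto_of_le_of_le' hlow tendsto_const_nhds
    · filter_upwards [hev] with n ⟨h1, h2, h3⟩
      have hL : 0 < Real.log n := lt_trans hc h1
      have hn0 : (0:ℝ) < n := by exact_mod_cast h3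
      have hfl : ((⌊(n : ℝ) ^ α₁⌋₊ : ℝ)) ≤ (n : ℝ) ^ α₁ := Nat.floor_le (by positivity)
      have hfg : (n : ℝ) ^ α₁ / 2 ≤ (⌊(n : ℝ) ^ α₁⌋₊ : ℝ) := by
        have := Nat.sub_one_lt_floor ((n : ℝ) ^ α₁)
        linarith
      have hf1 : (1:ℝ) ≤ (⌊(n : ℝ) ^ α₁⌋₊ : ℝ) := by linarith
      have hlogx : Real.log ((n : ℝ) ^ α₁) = α₁ * Real.log n := Real.log_rpow hn0 α₁
      have hlog2 : Real.log ((n : ℝ) ^ α₁ / 2) = α₁ * Real.log n - Real.log 2 := by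
        rw [Real.log_div (by positivity) (by norm_num), hlogx]
      have hlb : α₁ * Real.log n - Real.log 2 ≤ Real.log (⌊(n : ℝ) ^ α₁⌋₊ : ℕ) := by
        rw [← hlog2]
        exact Real.log_le_log (by positivity) hfg
      have hd0 : (0:ℝ) ≤ c / Real.log n := (div_pos hc hL).le
      calc c * α₁ - c * Real.log 2 / Real.log n
          = c / Real.log n * (α₁ * Real.log n - Real.log 2) := by field_simp
        _ ≤ c / Real.log n * Real.log (⌊(n : ℝ) ^ α₁⌋₊ : ℕ) :=
            mul_le_mul_of_nonneg_left hlb hd0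
    · filter_upwards [hev] with n ⟨h1, h2, h3⟩
      have hL : 0 < Real.log n := lt_trans hc h1
      have hn0 : (0:ℝ) < n := by exact_mod_cast h3
      have hfl : ((⌊(n : ℝ) ^ α₁⌋₊ : ℝ)) ≤ (n : ℝ) ^ α₁ := Nat.floor_le (by positivity)
      have hfg : (n : ℝ) ^ α₁ / 2 ≤ (⌊(n : ℝ) ^ α₁⌋₊ : ℝ) := by
        have := Nat.sub_one_lt_floor ((n : ℝ) ^ α₁)
        linarith
      have hf1 : (1:ℝ) ≤ (⌊(n : ℝ) ^ α₁⌋₊ : ℝ) := by linarith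
      have hlogx : Real.log ((n : ℝ) ^ α₁) = α₁ * Real.log n := Real.log_rpow hn0 α₁
      have hub : Real.log (⌊(n : ℝ) ^ α₁⌋₊ : ℕ) ≤ α₁ * Real.log n := by
        rw [← hlogx]
        exact Real.log_le_log (by linarith) hfl
      have hd0 : (0:ℝ) ≤ c / Real.log n := (div_pos hc hL).le
      calc c / Real.log n * Real.log (⌊(n : ℝ) ^ α₁⌋₊ : ℕ)
          ≤ c / Real.log n * (α₁ * Real.log n) := mul_le_mul_of_nonneg_left hub hd0
        _ = c * α₁ := by field_simp
  -- limit of h^(2d)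
  have hpow : Tendsto (fun n : ℕ => ((⌊(n : ℝ) ^ α₁⌋₊ : ℝ)) ^ (2 * (c / Real.log n)))
      atTop (nhds (Real.exp (2 * c * α₁))) := by
    have h1 : Tendsto (fun n : ℕ =>
        Real.exp (2 * (c / Real.log n * Real.log (⌊(n : ℝ) ^ α₁⌋₊ : ℕ))))
        atTop (nhds (Real.exp (2 * (c * α₁)))) :=
      (Real.continuous_exp.tendsto _).comp (key.const_mul 2)
    rw [show 2 * (c * α₁) = 2 * c * α₁ by ring] at h1
    apply h1.congr'
    filter_upwards [hev] with n ⟨h1, h2, h3⟩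
    have hfg : (n : ℝ) ^ α₁ / 2 ≤ (⌊(n : ℝ) ^ α₁⌋₊ : ℝ) := by
      have := Nat.sub_one_lt_floor ((n : ℝ) ^ α₁)
      linarith
    have hf0 : (0:ℝ) < (⌊(n : ℝ) ^ α₁⌋₊ : ℝ) := by linarith
    rw [Real.rpow_def_of_pos hf0]
    ring_nf
  -- limit of Gamma (1 + d)
  have hGamma : Tendsto (fun n : ℕ => Real.Gamma (1 + c / Real.log n)) atTop (nhds 1) := by
    have hcont : ContinuousAt Real.Gamma 1 := by
      refine (Real.differentiableAt_Gamma fun m => ?_).continuousAt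
      intro hE
      have : (0:ℝ) ≤ (m : ℝ) := Nat.cast_nonneg m
      linarith
    have h1 : Tendsto (fun n : ℕ => 1 + c / Real.log n) atTop (nhds (1 + 0)) :=
      tendsto_const_nhds.add hd_lim
    rw [add_zero] at h1
    have := hcont.tendsto.comp h1
    rwa [Real.Gamma_one] at this
  -- lower and upper comparison sequences
  have hden : Tendsto (fun n : ℕ => (2 * (c / Real.log n) + 1) *
      ((1 + c / Real.log n) * Real.Gamma (1 + c / Real.log n)) ^ 2) atTop (nhds 1) := by
    have := ((hd_lim.const_mul 2).add (tendsto_const_nhds (x := (1:ℝ)))).mul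
      ((((tendsto_const_nhds (x := (1:ℝ))).add hd_lim).mul hGamma).pow 2)
    norm_num at this
    exact this
  have hL : Tendsto (fun n : ℕ => ((⌊(n : ℝ) ^ α₁⌋₊ : ℝ)) ^ (2 * (c / Real.log n)) /
      ((2 * (c / Real.log n) + 1) *
        ((1 + c / Real.log n) * Real.Gamma (1 + c / Real.log n)) ^ 2))
      atTop (nhds (Real.exp (2 * c * α₁))) := by
    have := hpow.div hden one_ne_zero
    rw [div_one] at this; exact this
  have hU : Tendsto (fun n : ℕ => ((⌊(n : ℝ) ^ α₁⌋₊ : ℝ)) ^ (2 * (c / Real.log n)) /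
      (Real.Gamma (1 + c / Real.log n)) ^ 2) atTop (nhds (Real.exp (2 * c * α₁))) := by
    have := hpow.div (hGamma.pow 2) (by norm_num)
    rw [one_pow, div_one] at this; exact this
  apply tendsto_of_tendsto_of_tendsto_of_le_of_le' hL hU
  · filter_upwards [hev] with n ⟨h1, h2, h3⟩
    obtain ⟨hd0, hd1, hh1⟩ := hfacts n h1 h2 h3
    exact (avg_sq_bounds hd0 hd1 hh1).1
  · filter_upwards [hev] with n ⟨h1, h2, h3⟩
    obtain ⟨hd0, hd1, hh1⟩ := hfacts n h1 h2 h3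
    exact (avg_sq_bounds hd0 hd1 hh1).2
end

section
/- Let Σ and Σ̂ be real symmetric positive semidefinite p×p matrices with the smallest eigenvalue of Σ bounded below by λ > 0. Then |Σ̂^{1/2} − Σ^{1/2}| ≤ C(λ, p) · |Σ̂ − Σ|^{1/2} for a constant C depending only on λ and p, where |·| is the Frobenius norm and M^{1/2} denotes the positive semidefinite square root. -/
open Matrix

/-- Frobenius norm of a real square matrix. -/
noncomputable def frob {p : ℕ} (A : Matrix (Fin p) (Fin p) ℝ) : ℝ :=
  Real.sqrt (∑ i, ∑ j, (A i j) ^ 2)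

namespace Matrix.PosSemidef

open scoped ComplexOrder

/-- The positive semidefinite square root of a positive semidefinite matrix, with the definition
it had in Mathlib (December 2024), where it has since been removed. -/
noncomputable def sqrt {n : Type*} [Fintype n] [DecidableEq n] {𝕜 : Type*} [RCLike 𝕜]
    {A : Matrix n n 𝕜} (hA : A.PosSemidef) : Matrix n n 𝕜 :=
  hA.1.eigenvectorUnitary.1 * diagonal ((↑) ∘ (√·) ∘ hA.1.eigenvalues) *
  (star hA.1.eigenvectorUnitary : Matrix n n 𝕜)

end Matrix.PosSemidef

namespace Matrix.PosSemidef

open scoped ComplexOrder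

lemma posSemidef_sqrt {n : Type*} [Fintype n] [DecidableEq n] {𝕜 : Type*} [RCLike 𝕜]
    {A : Matrix n n 𝕜} (hA : A.PosSemidef) : hA.sqrt.PosSemidef := by
  have hd : (diagonal ((↑) ∘ (√·) ∘ hA.1.eigenvalues : n → 𝕜)).PosSemidef := by
    refine PosSemidef.diagonal fun i => ?_
    simp only [Pi.zero_apply, Function.comp_apply]
    exact RCLike.ofReal_nonneg.mpr (Real.sqrt_nonneg _)
  have := hd.mul_mul_conjTranspose_same (hA.1.eigenvectorUnitary : Matrix n n 𝕜)
  unfold sqrt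
  rwa [star_eq_conjTranspose]

lemma sqrt_mul_self {n : Type*} [Fintype n] [DecidableEq n] {𝕜 : Type*} [RCLike 𝕜]
    {A : Matrix n n 𝕜} (hA : A.PosSemidef) : hA.sqrt * hA.sqrt = A := by
  conv_rhs => rw [hA.1.spectral_theorem, Unitary.conjStarAlgAut_apply]
  unfold sqrt
  have hU : (star hA.1.eigenvectorUnitary : Matrix n n 𝕜) * hA.1.eigenvectorUnitary.1 = 1 :=
    Unitary.coe_star_mul_self _
  have hDD : diagonal ((↑) ∘ (√·) ∘ hA.1.eigenvalues : n → 𝕜) *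
      diagonal ((↑) ∘ (√·) ∘ hA.1.eigenvalues : n → 𝕜) =
      diagonal (RCLike.ofReal ∘ hA.1.eigenvalues) := by
    rw [diagonal_mul_diagonal]
    congr 1
    funext i
    simp only [Function.comp_apply]
    rw [← RCLike.ofReal_mul, Real.mul_self_sqrt (hA.eigenvalues_nonneg i)]
  calc _ = hA.1.eigenvectorUnitary.1 * diagonal ((↑) ∘ (√·) ∘ hA.1.eigenvalues) *
        ((star hA.1.eigenvectorUnitary : Matrix n n 𝕜) * hA.1.eigenvectorUnitary.1) *
        diagonal ((↑) ∘ (√·) ∘ hA.1.eigenvalues) *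
        (star hA.1.eigenvectorUnitary : Matrix n n 𝕜) := by simp only [Matrix.mul_assoc]
    _ = _ := by rw [hU, Matrix.mul_one, Matrix.mul_assoc (hA.1.eigenvectorUnitary : Matrix n n 𝕜) (diagonal _) (diagonal _), hDD]

end Matrix.PosSemidef

lemma sumsq_eq_trace {p : ℕ} (M : Matrix (Fin p) (Fin p) ℝ) :
    (∑ i, ∑ j, (M i j) ^ 2) = (Mᵀ * M).trace := by
  simp only [Matrix.trace, Matrix.diag, Matrix.mul_apply, Matrix.transpose_apply, sq]
  rw [Finset.sum_comm]

lemma sumsq_conj {p : ℕ} (U M : Matrix (Fin p) (Fin p) ℝ) (h2 : U * Uᵀ = 1) :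
    (∑ i, ∑ j, ((Uᵀ * M * U) i j) ^ 2) = ∑ i, ∑ j, (M i j) ^ 2 := by
  rw [sumsq_eq_trace, sumsq_eq_trace]
  have key : (Uᵀ * M * U)ᵀ * (Uᵀ * M * U) = Uᵀ * (Mᵀ * M) * U := by
    simp only [Matrix.transpose_mul, Matrix.transpose_transpose, Matrix.mul_assoc]
    rw [← Matrix.mul_assoc U Uᵀ, h2, Matrix.one_mul]
  rw [key, Matrix.trace_mul_cycle, h2, Matrix.one_mul]

lemma diag_nonneg {p : ℕ} {M : Matrix (Fin p) (Fin p) ℝ} (hM : M.PosSemidef) (i : Fin p) :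
    0 ≤ M i i := by
  exact hM.diag_nonneg

theorem stmt8 (p : ℕ) (lam : ℝ) (hlam : 0 < lam) :
    ∃ C : ℝ, ∀ (A B : Matrix (Fin p) (Fin p) ℝ) (hA : A.PosSemidef) (hB : B.PosSemidef),
      (∀ x : Fin p → ℝ, lam * (x ⬝ᵥ x) ≤ x ⬝ᵥ (A *ᵥ x)) →
      frob (hB.sqrt - hA.sqrt) ≤ C * Real.sqrt (frob (B - A)) := by
  refine ⟨Real.sqrt (Real.sqrt p), fun A B hA hB _ => ?_⟩
  have hS := hA.posSemidef_sqrt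
  have hT := hB.posSemidef_sqrt
  set S := hA.sqrt with hSdef
  set T := hB.sqrt with hTdef
  set D := T - S with hDdef
  set E := B - A with hEdef
  have hD : D.IsHermitian := hT.1.sub hS.1
  set U : Matrix (Fin p) (Fin p) ℝ := (Matrix.IsHermitian.eigenvectorUnitary hD : Matrix (Fin p) (Fin p) ℝ) with hUdef
  have hUmem : U ∈ Matrix.unitaryGroup (Fin p) ℝ := (Matrix.IsHermitian.eigenvectorUnitary hD).2
  have hstar : star U = Uᵀ := by
    rw [Matrix.star_eq_conjTranspose, Matrix.conjTranspose_eq_transpose_of_trivial]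
  have h1 : Uᵀ * U = 1 := by
    rw [← hstar]; exact Matrix.mem_unitaryGroup_iff'.mp hUmem
  have h2 : U * Uᵀ = 1 := by
    rw [← hstar]; exact Matrix.mem_unitaryGroup_iff.mp hUmem
  set d := hD.eigenvalues with hddef
  have hdiag : Uᵀ * D * U = Matrix.diagonal d := by
    have := hD.conjStarAlgAut_star_eigenvectorUnitary
    rw [Unitary.conjStarAlgAut_apply] at this
    simp only [Unitary.coe_star, star_star] at this
    rw [← hUdef] at this
    rw [hstar] at this
    rw [this]
    rfl
  -- key identity  E = T * D + D * S
  have hkey : E = T * D + D * S := by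
    have hTT : T * T = B := hB.sqrt_mul_self
    have hSS : S * S = A := hA.sqrt_mul_self
    rw [hEdef, hDdef, ← hTT, ← hSS]
    noncomm_ring
  set S' := Uᵀ * S * U with hS'def
  set T' := Uᵀ * T * U with hT'def
  set F := Uᵀ * E * U with hFdef
  have hF : F = T' * Matrix.diagonal d + Matrix.diagonal d * S' := by
    rw [hFdef, hkey, ← hdiag, hS'def, hT'def]
    simp only [Matrix.add_mul, Matrix.mul_add, Matrix.mul_assoc]
    rw [← Matrix.mul_assoc U Uᵀ (D * U), h2, Matrix.one_mul,
        ← Matrix.mul_assoc U Uᵀ (S * U), h2, Matrix.one_mul]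
  have hFii : ∀ i, F i i = d i * (T' i i + S' i i) := by
    intro i
    rw [hF]
    simp [Matrix.mul_apply, Matrix.diagonal_apply, Finset.sum_ite_eq, Finset.sum_ite_eq']
    ring
  -- |d i| ≤ T' i i + S' i i
  have habs : ∀ i, |d i| ≤ T' i i + S' i i := by
    intro i
    have hP : (S + S).PosSemidef := hS.add hS
    have hQ : (T + T).PosSemidef := hT.add hT
    have hP' : (Uᵀ * (S + S) * U).PosSemidef := by
      rw [← hstar]; exact hP.conjTranspose_mul_mul_same U
    have hQ' : (Uᵀ * (T + T) * U).PosSemidef := by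
      rw [← hstar]; exact hQ.conjTranspose_mul_mul_same U
    have e1 : Uᵀ * (S + S) * U = T' + S' - Matrix.diagonal d := by
      rw [hT'def, hS'def, ← hdiag, hDdef]
      simp only [Matrix.add_mul, Matrix.mul_add, Matrix.sub_mul, Matrix.mul_sub]
      abel
    have e2 : Uᵀ * (T + T) * U = T' + S' + Matrix.diagonal d := by
      rw [hT'def, hS'def, ← hdiag, hDdef]
      simp only [Matrix.add_mul, Matrix.mul_add, Matrix.sub_mul, Matrix.mul_sub]
      abel
    have g1 : 0 ≤ T' i i + S' i i - d i := by
      have := diag_nonneg hP' i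
      rw [e1] at this
      simpa [Matrix.diagonal_apply] using this
    have g2 : 0 ≤ T' i i + S' i i + d i := by
      have := diag_nonneg hQ' i
      rw [e2] at this
      simpa [Matrix.diagonal_apply] using this
    rw [abs_le]
    constructor <;> linarith
  have hd2 : ∀ i, d i ^ 2 ≤ |F i i| := by
    intro i
    rw [hFii i, abs_mul]
    have h0 : 0 ≤ T' i i + S' i i := le_trans (abs_nonneg _) (habs i)
    calc d i ^ 2 = |d i| * |d i| := by rw [← abs_mul, ← sq, abs_of_nonneg (sq_nonneg _)]
      _ ≤ |d i| * (T' i i + S' i i) := by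
          exact mul_le_mul_of_nonneg_left (habs i) (abs_nonneg _)
      _ = |d i| * |T' i i + S' i i| := by rw [abs_of_nonneg h0]
  -- sum of d² equals sum of squares of D
  have hsumD : (∑ i, ∑ j, (D i j) ^ 2) = ∑ i, d i ^ 2 := by
    have := sumsq_conj U D h2
    rw [hdiag] at this
    rw [← this]
    simp [Matrix.diagonal_apply, Finset.sum_ite_eq']
  have hE2 : (∑ i, ∑ j, (F i j) ^ 2) = ∑ i, ∑ j, (E i j) ^ 2 := sumsq_conj U E h2
  -- diagonal of F dominated by full sum
  have hdiagF : (∑ i, (F i i) ^ 2) ≤ ∑ i, ∑ j, (F i j) ^ 2 := by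
    apply Finset.sum_le_sum
    intro i _
    exact Finset.single_le_sum (f := fun j => (F i j) ^ 2)
      (fun j _ => sq_nonneg _) (Finset.mem_univ i)
  -- Cauchy–Schwarz on the diagonal
  have hCS : (∑ i, |F i i|) ^ 2 ≤ (p : ℝ) * ∑ i, (F i i) ^ 2 := by
    have := Finset.sum_mul_sq_le_sq_mul_sq Finset.univ (fun _ : Fin p => (1 : ℝ))
      (fun i => |F i i|)
    simpa [sq_abs] using this
  set eN := ∑ i, ∑ j, (E i j) ^ 2 with heN
  have heNnn : 0 ≤ eN := Finset.sum_nonneg fun i _ => Finset.sum_nonneg fun j _ => sq_nonneg _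
  have hmain : (∑ i, ∑ j, (D i j) ^ 2) ≤ Real.sqrt ((p : ℝ) * eN) := by
    rw [hsumD]
    have s1 : (∑ i, d i ^ 2) ≤ ∑ i, |F i i| := Finset.sum_le_sum fun i _ => hd2 i
    have s2 : (∑ i, |F i i|) ≤ Real.sqrt ((p : ℝ) * eN) := by
      rw [← Real.sqrt_sq (Finset.sum_nonneg fun i _ => abs_nonneg _)]
      apply Real.sqrt_le_sqrt
      calc (∑ i, |F i i|) ^ 2 ≤ (p : ℝ) * ∑ i, (F i i) ^ 2 := hCS
        _ ≤ (p : ℝ) * ∑ i, ∑ j, (F i j) ^ 2 := by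
            exact mul_le_mul_of_nonneg_left hdiagF (Nat.cast_nonneg p)
        _ = (p : ℝ) * eN := by rw [hE2]
    linarith
  -- conclude
  have hfrobE : frob E = Real.sqrt eN := rfl
  have hfD : frob D ^ 2 = ∑ i, ∑ j, (D i j) ^ 2 := by
    rw [frob, Real.sq_sqrt]
    exact Finset.sum_nonneg fun i _ => Finset.sum_nonneg fun j _ => sq_nonneg _
  have goal2 : frob D ^ 2 ≤ (Real.sqrt (Real.sqrt p) * Real.sqrt (frob E)) ^ 2 := by
    rw [hfD, hfrobE, mul_pow, Real.sq_sqrt (Real.sqrt_nonneg (p : ℝ)),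
        Real.sq_sqrt (Real.sqrt_nonneg eN), ← Real.sqrt_mul (Nat.cast_nonneg p)]
    exact hmain
  have hDnn : 0 ≤ frob D := Real.sqrt_nonneg _
  have h := Real.sqrt_le_sqrt goal2
  rwa [Real.sqrt_sq hDnn, Real.sqrt_sq (by positivity)] at h
end

section
/- Let h = o(n), h → ∞, d_n = c/log n with c > 0. Then Σ_{l=0}^∞ ((h+l)^{d_n} − l^{d_n})² = O(h/ log h) as n → ∞ (where the l = 0 term is h^{2d_n}). -/
open Filter

lemma my_bern (x d : ℝ) (hx : 0 ≤ x) (hd0 : 0 ≤ d) (hd1 : d ≤ 1) :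
    (1 + x) ^ d ≤ 1 + d * x := by
  have h := Real.geom_mean_le_arith_mean2_weighted hd0 (by linarith : (0:ℝ) ≤ 1 - d)
    (by linarith : (0:ℝ) ≤ 1 + x) (zero_le_one) (by ring)
  calc (1 + x) ^ d = (1 + x) ^ d * 1 ^ (1 - d) := by rw [Real.one_rpow, mul_one]
    _ ≤ d * (1 + x) + (1 - d) * 1 := h
    _ = 1 + d * x := by ring

lemma my_subadd (a b d : ℝ) (ha : 0 ≤ a) (hb : 0 ≤ b) (hd0 : 0 ≤ d) (hd1 : d ≤ 1) :
    (a + b) ^ d ≤ a ^ d + b ^ d := by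
  have h := NNReal.rpow_add_le_add_rpow (a.toNNReal) (b.toNNReal) hd0 hd1
  have h2 := NNReal.coe_le_coe.2 h
  push_cast at h2
  rwa [Real.coe_toNNReal a ha, Real.coe_toNNReal b hb] at h2

lemma my_mvt (H l d : ℝ) (hH : 0 ≤ H) (hl : 0 < l) (hd0 : 0 ≤ d) (hd1 : d ≤ 1) :
    (H + l) ^ d ≤ l ^ d + d * H * l ^ (d - 1) := by
  have hbase : H + l = l * (1 + H / l) := by field_simp; ring
  have h1 : (H + l) ^ d = l ^ d * (1 + H / l) ^ d := by
    rw [hbase, Real.mul_rpow hl.le (by positivity)]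
  have h2 : (1 + H / l) ^ d ≤ 1 + d * (H / l) := my_bern _ _ (by positivity) hd0 hd1
  have h3 : l ^ (d - 1) = l ^ d / l := by
    rw [Real.rpow_sub hl, Real.rpow_one]
  calc (H + l) ^ d = l ^ d * (1 + H / l) ^ d := h1
    _ ≤ l ^ d * (1 + d * (H / l)) := by
        apply mul_le_mul_of_nonneg_left h2 (Real.rpow_nonneg hl.le d)
    _ = l ^ d + d * H * (l ^ d / l) := by field_simp
    _ = l ^ d + d * H * l ^ (d - 1) := by rw [h3]

lemma my_tele (x q : ℝ) (hx : 2 ≤ x) (hq0 : 0 < q) (hq1 : q ≤ 1) :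
    q * x ^ (-q - 1) ≤ (x - 1) ^ (-q) - x ^ (-q) := by
  have hx0 : (0:ℝ) < x := by linarith
  have hx1 : (0:ℝ) < x - 1 := by linarith
  set w : ℝ := (x - 1) / x with hw
  have hw0 : 0 < w := by positivity
  have hw1 : 1 - w = 1 / x := by rw [hw]; field_simp; ring
  have hamgm : w ^ q ≤ 1 - q / x := by
    have h := Real.geom_mean_le_arith_mean2_weighted hq0.le (by linarith : (0:ℝ) ≤ 1 - q)
      hw0.le zero_le_one (by ring)
    calc w ^ q = w ^ q * 1 ^ (1 - q) := by rw [Real.one_rpow, mul_one]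
      _ ≤ q * w + (1 - q) * 1 := h
      _ = 1 - q * (1 - w) := by ring
      _ = 1 - q / x := by rw [hw1]; ring
  have hqx : q / x ≤ 1 / 2 := by
    rw [div_le_div_iff₀ hx0 two_pos]; nlinarith
  have hqx0 : 0 < q / x := by positivity
  have hwq0 : 0 < w ^ q := Real.rpow_pos_of_pos hw0 q
  -- (1 + q/x) ≤ w^(-q)
  have hkey : 1 + q / x ≤ w ^ (-q) := by
    have h1 : (1 + q / x) * w ^ q ≤ (1 + q / x) * (1 - q / x) :=
      mul_le_mul_of_nonneg_left hamgm (by linarith)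
    have h2 : (1 + q / x) * (1 - q / x) ≤ 1 := by nlinarith
    have h3 : (1 + q / x) * w ^ q ≤ 1 := h1.trans h2
    have h4 : w ^ (-q) = 1 / w ^ q := by rw [Real.rpow_neg hw0.le, one_div]
    rw [h4, le_div_iff₀ hwq0]
    exact h3
  -- multiply by x^(-q)
  have hxq0 : 0 < x ^ (-q) := Real.rpow_pos_of_pos hx0 _
  have hprod : w ^ (-q) * x ^ (-q) = (x - 1) ^ (-q) := by
    rw [← Real.mul_rpow hw0.le hx0.le]
    congr 1
    rw [hw]
    field_simp
  have h5 : (1 + q / x) * x ^ (-q) ≤ (x - 1) ^ (-q) := by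
    rw [← hprod]
    exact mul_le_mul_of_nonneg_right hkey hxq0.le
  have h6 : x ^ (-q - 1) = x ^ (-q) / x := by
    rw [Real.rpow_sub hx0, Real.rpow_one]
  have h7 : (1 + q / x) * x ^ (-q) = x ^ (-q) + q * (x ^ (-q) / x) := by ring
  rw [h6]
  nlinarith [h5, h7]
set_option maxHeartbeats 1000000 in
theorem stmt14 (c : ℝ) (hc : 0 < c) (h : ℕ → ℕ)
    (hho : Tendsto (fun n : ℕ => (h n : ℝ) / (n : ℝ)) atTop (nhds 0))
    (hhi : Tendsto h atTop atTop) :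
    ∃ C : ℝ, ∃ N : ℕ, ∀ n : ℕ, N ≤ n →
      Summable (fun l : ℕ =>
        (((h n : ℝ) + (l : ℝ)) ^ (c / Real.log n) - (l : ℝ) ^ (c / Real.log n)) ^ 2) ∧
      ∑' l : ℕ,
          (((h n : ℝ) + (l : ℝ)) ^ (c / Real.log n) - (l : ℝ) ^ (c / Real.log n)) ^ 2
        ≤ C * (h n : ℝ) / Real.log (h n) := by
  have hev1 : ∀ᶠ n : ℕ in atTop, 16 ≤ h n := hhi.eventually_ge_atTop 16
  have hev2 : ∀ᶠ n : ℕ in atTop, (h n : ℝ) / n < 1 := hho.eventually (eventually_lt_nhds one_pos)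
  obtain ⟨A, hA⟩ := eventually_atTop.mp (hev1.and hev2)
  refine ⟨(3 + 2 * c ^ 2) * Real.exp (2 * c), max A (⌈Real.exp (4 * c)⌉₊ + 1), ?_⟩
  intro n hn
  obtain ⟨hH16, hHn1⟩ := hA n (le_trans (le_max_left _ _) hn)
  have hn1 : (⌈Real.exp (4 * c)⌉₊ + 1) ≤ n := le_trans (le_max_right _ _) hn
  have hn0 : 0 < n := lt_of_lt_of_le (Nat.succ_pos _) hn1
  have hnR0 : (0:ℝ) < (n:ℝ) := by exact_mod_cast hn0
  have hnR : Real.exp (4 * c) ≤ (n : ℝ) := by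
    calc Real.exp (4 * c) ≤ (⌈Real.exp (4 * c)⌉₊ : ℝ) := Nat.le_ceil _
      _ ≤ (n : ℝ) := by exact_mod_cast le_trans (Nat.le_succ _) hn1
  have hlogn : 4 * c ≤ Real.log n := (Real.le_log_iff_exp_le hnR0).2 hnR
  have hlogn0 : 0 < Real.log n := by linarith
  have hHn : (h n : ℝ) ≤ (n : ℝ) := by
    have := (div_lt_one hnR0).mp hHn1
    linarith
  set H : ℝ := (h n : ℝ) with hHdef
  set d : ℝ := c / Real.log n with hddef
  set L : ℝ := Real.log H with hLdef
  set E : ℝ := Real.exp (2 * c) with hEdef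
  have hH16R : (16:ℝ) ≤ H := by rw [hHdef]; exact_mod_cast hH16
  have hH0 : (0:ℝ) < H := by linarith
  have hE0 : (0:ℝ) < E := Real.exp_pos _
  have he2 : Real.exp 2 = Real.exp 1 * Real.exp 1 := by rw [← Real.exp_add]; norm_num
  have hexp2 : Real.exp 2 ≤ 16 := by nlinarith [Real.exp_one_lt_d9, Real.exp_pos 1]
  have hL2 : 2 ≤ L := by
    rw [hLdef, Real.le_log_iff_exp_le hH0]; linarith
  have hL0 : (0:ℝ) < L := by linarith
  have hLlogn : L ≤ Real.log n := Real.log_le_log hH0 hHn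
  have hd0 : 0 < d := div_pos hc hlogn0
  have hd14 : d ≤ 1 / 4 := by
    rw [hddef, div_le_iff₀ hlogn0]; linarith
  have hdL : d ≤ c / L := by
    rw [hddef]; gcongr
  have hrpowE : ∀ x : ℝ, 0 < x → x ≤ H → x ^ (2 * d) ≤ E := by
    intro x hx hxH
    rw [Real.rpow_def_of_pos hx, hEdef]
    apply Real.exp_le_exp.2
    have hlx : Real.log x ≤ Real.log n := le_trans (Real.log_le_log hx hxH) hLlogn
    have heq : Real.log x * (2 * d) = 2 * c * (Real.log x / Real.log n) := by
      rw [hddef]; field_simp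
    rw [heq]
    have hr1 : Real.log x / Real.log n ≤ 1 := (div_le_one hlogn0).2 hlx
    nlinarith
  set F : ℕ → ℝ := fun l : ℕ => ((H + (l:ℝ)) ^ d - (l:ℝ) ^ d) ^ 2 with hFdef
  have bound1 : ∀ l : ℕ, F l ≤ E := by
    intro l
    have hl0 : (0:ℝ) ≤ l := Nat.cast_nonneg l
    have hmono : (l:ℝ) ^ d ≤ (H + (l:ℝ)) ^ d := Real.rpow_le_rpow hl0 (by linarith) hd0.le
    have hsub : (H + (l:ℝ)) ^ d ≤ H ^ d + (l:ℝ) ^ d :=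
      my_subadd H l d hH0.le hl0 hd0.le (by linarith)
    have hdiff : (H + (l:ℝ)) ^ d - (l:ℝ) ^ d ≤ H ^ d := by linarith
    calc F l ≤ (H ^ d) ^ 2 := pow_le_pow_left₀ (by linarith) hdiff 2
      _ = H ^ (2 * d) := by
          rw [← Real.rpow_natCast (H ^ d) 2, ← Real.rpow_mul hH0.le]
          congr 1; push_cast; ring
      _ ≤ E := hrpowE H hH0 le_rfl
  have bound2 : ∀ l : ℕ, 1 ≤ l → F l ≤ d ^ 2 * H ^ 2 * (l:ℝ) ^ (2 * d - 2) := by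
    intro l hl
    have hl0 : (0:ℝ) < l := by exact_mod_cast hl
    have hmvt : (H + (l:ℝ)) ^ d ≤ (l:ℝ) ^ d + d * H * (l:ℝ) ^ (d - 1) :=
      my_mvt H l d hH0.le hl0 hd0.le (by linarith)
    have hmono : (l:ℝ) ^ d ≤ (H + (l:ℝ)) ^ d := Real.rpow_le_rpow hl0.le (by linarith) hd0.le
    calc F l ≤ (d * H * (l:ℝ) ^ (d - 1)) ^ 2 :=
        pow_le_pow_left₀ (by linarith) (by linarith) 2
      _ = d ^ 2 * H ^ 2 * ((l:ℝ) ^ (d - 1)) ^ 2 := by ring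
      _ = d ^ 2 * H ^ 2 * (l:ℝ) ^ (2 * d - 2) := by
          rw [← Real.rpow_natCast ((l:ℝ) ^ (d - 1)) 2, ← Real.rpow_mul hl0.le]
          congr 1; push_cast; ring
  set m : ℕ := ⌈H / L⌉₊ with hmdef
  have hHL0 : 0 < H / L := div_pos hH0 hL0
  have hHL1 : 1 ≤ H / L := by
    rw [le_div_iff₀ hL0]
    have hlog1 : L ≤ H - 1 := by rw [hLdef]; exact Real.log_le_sub_one_of_pos hH0
    linarith
  have hm1 : 0 < m := Nat.ceil_pos.2 hHL0
  have hm0R : (0:ℝ) < m := by exact_mod_cast hm1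
  have hmlb : H / L ≤ (m:ℝ) := Nat.le_ceil _
  have hmub : (m:ℝ) ≤ H / L + 1 := (Nat.ceil_lt_add_one hHL0.le).le
  have hmH : (m:ℝ) ≤ H := by
    have h1 : H / L ≤ H / 2 := by gcongr
    linarith
  have hminv : 1 / (m:ℝ) ≤ L / H := by
    rw [div_le_div_iff₀ hm0R hH0]
    have := (div_le_iff₀ hL0).1 hmlb
    nlinarith
  have htele : ∀ k' : ℕ, ∑ l ∈ Finset.Ico (m+1) k', F l ≤ 2 * c ^ 2 * E * (H / L) := by
    intro k'
    have step1 : ∑ l ∈ Finset.Ico (m+1) k', F l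
        ≤ ∑ l ∈ Finset.Ico (m+1) k', d ^ 2 * H ^ 2 * (l:ℝ) ^ (2 * d - 2) := by
      apply Finset.sum_le_sum
      intro l hl
      exact bound2 l (by have := (Finset.mem_Ico.1 hl).1; omega)
    set G : ℕ → ℝ := fun i : ℕ => ((m + i : ℕ):ℝ) ^ (2 * d - 1) with hGdef
    clear_value G
    have hterm : ∀ i : ℕ, ((m+1+i : ℕ):ℝ) ^ (2 * d - 2) ≤ 2 * (G i - G (i+1)) := by
      intro i
      have hx2 : (2:ℝ) ≤ ((m+1+i : ℕ):ℝ) := by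
        have : (2:ℕ) ≤ m+1+i := by omega
        exact_mod_cast this
      have htl := my_tele ((m+1+i : ℕ):ℝ) (1 - 2*d) hx2 (by linarith) (by linarith)
      have he1 : -(1 - 2*d) - 1 = 2*d - 2 := by ring
      have he2 : -(1 - 2*d) = 2*d - 1 := by ring
      have hsub1 : ((m+1+i : ℕ):ℝ) - 1 = ((m+i : ℕ):ℝ) := by push_cast; ring
      rw [he1, he2, hsub1] at htl
      have hGi : G i = ((m+i : ℕ):ℝ) ^ (2*d - 1) := by simp only [hGdef]
      have hGi1 : G (i+1) = ((m+1+i : ℕ):ℝ) ^ (2*d - 1) := by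
        simp only [hGdef, show m + (i+1) = m+1+i from by omega]
      have hX0 : 0 ≤ ((m+1+i : ℕ):ℝ) ^ (2*d - 2) := Real.rpow_nonneg (by positivity) _
      rw [hGi, hGi1]
      nlinarith [htl, hX0, mul_nonneg hX0 (by linarith : (0:ℝ) ≤ 1 - 4*d)]
    have step3 : ∑ l ∈ Finset.Ico (m+1) k', (l:ℝ) ^ (2 * d - 2)
        = ∑ i ∈ Finset.range (k' - (m+1)), ((m+1+i : ℕ):ℝ) ^ (2 * d - 2) :=
      Finset.sum_Ico_eq_sum_range _ _ _
    have step4 : ∑ i ∈ Finset.range (k' - (m+1)), ((m+1+i : ℕ):ℝ) ^ (2 * d - 2)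
        ≤ 2 * (m:ℝ) ^ (2 * d - 1) := by
      calc ∑ i ∈ Finset.range (k' - (m+1)), ((m+1+i : ℕ):ℝ) ^ (2 * d - 2)
          ≤ ∑ i ∈ Finset.range (k' - (m+1)), 2 * (G i - G (i+1)) :=
            Finset.sum_le_sum (fun i _ => hterm i)
        _ = 2 * ∑ i ∈ Finset.range (k' - (m+1)), (G i - G (i+1)) := by
            rw [Finset.mul_sum]
        _ = 2 * (G 0 - G (k' - (m+1))) := by rw [Finset.sum_range_sub' G]
        _ ≤ 2 * G 0 := by
            have : 0 ≤ G (k' - (m+1)) := by simp only [hGdef]; positivity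
            linarith
        _ = 2 * (m:ℝ) ^ (2 * d - 1) := by simp only [hGdef]; norm_num
    have hm2d : (m:ℝ) ^ (2 * d) ≤ E := hrpowE m hm0R hmH
    have hmtail : (m:ℝ) ^ (2 * d - 1) ≤ E * (L / H) := by
      have hmsub : (m:ℝ) ^ (2*d - 1) = (m:ℝ) ^ (2*d) / (m:ℝ) := by
        rw [Real.rpow_sub hm0R, Real.rpow_one]
      rw [hmsub]
      calc (m:ℝ) ^ (2*d) / (m:ℝ) ≤ E / (m:ℝ) := div_le_div₀ hE0.le hm2d hm0R le_rfl
        _ = E * (1 / (m:ℝ)) := by ring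
        _ ≤ E * (L / H) := mul_le_mul_of_nonneg_left hminv hE0.le
    have hd2 : d ^ 2 ≤ c ^ 2 / L ^ 2 := by
      rw [← div_pow]
      exact pow_le_pow_left₀ hd0.le hdL 2
    calc ∑ l ∈ Finset.Ico (m+1) k', F l
        ≤ ∑ l ∈ Finset.Ico (m+1) k', d ^ 2 * H ^ 2 * (l:ℝ) ^ (2 * d - 2) := step1
      _ = d ^ 2 * H ^ 2 * ∑ l ∈ Finset.Ico (m+1) k', (l:ℝ) ^ (2 * d - 2) := by
          rw [Finset.mul_sum]
      _ ≤ d ^ 2 * H ^ 2 * (2 * (m:ℝ) ^ (2 * d - 1)) := by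
          apply mul_le_mul_of_nonneg_left _ (by positivity)
          rw [step3]; linarith [step4]
      _ ≤ d ^ 2 * H ^ 2 * (2 * (E * (L / H))) := by
          apply mul_le_mul_of_nonneg_left _ (by positivity)
          linarith [hmtail]
      _ = 2 * E * (d ^ 2 * H * L) := by field_simp
      _ ≤ 2 * E * ((c ^ 2 / L ^ 2) * H * L) := by
          apply mul_le_mul_of_nonneg_left _ (by positivity)
          apply mul_le_mul_of_nonneg_right (mul_le_mul_of_nonneg_right hd2 hH0.le) hL0.le
      _ = 2 * c ^ 2 * E * (H / L) := by field_simp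
  have key : ∀ k : ℕ, ∑ l ∈ Finset.range k, F l ≤ (3 + 2 * c ^ 2) * E * (H / L) := by
    intro k
    have hs1 : ∑ l ∈ Finset.range k, F l ≤ ∑ l ∈ Finset.range (max k (m+1)), F l :=
      Finset.sum_le_sum_of_subset_of_nonneg (Finset.range_subset_range.2 (le_max_left _ _))
        (fun i _ _ => sq_nonneg _)
    have hsplit : ∑ l ∈ Finset.range (m+1), F l + ∑ l ∈ Finset.Ico (m+1) (max k (m+1)), F l
        = ∑ l ∈ Finset.range (max k (m+1)), F l :=
      Finset.sum_range_add_sum_Ico F (le_max_right _ _)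
    have hhead : ∑ l ∈ Finset.range (m+1), F l ≤ 3 * (H / L) * E := by
      calc ∑ l ∈ Finset.range (m+1), F l ≤ (Finset.range (m+1)).card • E :=
          Finset.sum_le_card_nsmul _ _ _ (fun l _ => bound1 l)
        _ = ((m+1 : ℕ):ℝ) * E := by rw [Finset.card_range, nsmul_eq_mul]
        _ ≤ 3 * (H / L) * E := by
            apply mul_le_mul_of_nonneg_right _ hE0.le
            push_cast
            linarith
    have htail := htele (max k (m+1))
    linarith
  constructor
  · exact summable_of_sum_range_le (fun l => sq_nonneg _) key
  · calc ∑' (l : ℕ), F l ≤ (3 + 2 * c ^ 2) * E * (H / L) :=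
        Real.tsum_le_of_sum_range_le (fun l => sq_nonneg _) key
      _ = (3 + 2 * c ^ 2) * E * H / L := by ring
end

section
/- Let d ∈ (0,1/2), m ≥ 1. For the coefficients p_j = Σ_{i=0}^{min(m,j)−1} ψ_{j−i}(d) (with ψ the fractional differencing coefficients, and modulo boundary adjustments p_j = O(m j^{d−1}) for j ≥ m), one has Σ_{j=0}^{L+m−1} p_j² = O(m^{2d+1}) for any L ≥ m. -/
open Real Finset in
lemma gautschi {d : ℝ} (hd0 : 0 < d) (hd1 : d < 1) {a : ℝ} (ha : 1 ≤ a) :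
    Real.Gamma (a + d) ≤ a ^ d * Real.Gamma a := by
  have ha0 : 0 < a := lt_of_lt_of_le one_pos ha
  have hmem : a ∈ Set.Ioi (0:ℝ) := ha0
  have hmem' : a + 1 ∈ Set.Ioi (0:ℝ) := by simp only [Set.mem_Ioi]; linarith
  have h := Real.convexOn_log_Gamma.2 hmem hmem' (by linarith : (0:ℝ) ≤ 1 - d) hd0.le
    (by ring)
  simp only [smul_eq_mul, Function.comp_apply] at h
  have hcomb : (1 - d) * a + d * (a + 1) = a + d := by ring
  rw [hcomb] at h
  have hΓa : 0 < Real.Gamma a := Real.Gamma_pos_of_pos ha0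
  have hΓad : 0 < Real.Gamma (a + d) := Real.Gamma_pos_of_pos (by linarith)
  have h1 : Real.Gamma (a + 1) = a * Real.Gamma a := Real.Gamma_add_one (ne_of_gt ha0)
  rw [h1, Real.log_mul (ne_of_gt ha0) (ne_of_gt hΓa)] at h
  have h2 : Real.log (Real.Gamma (a + d)) ≤ Real.log (a ^ d * Real.Gamma a) := by
    rw [Real.log_mul (ne_of_gt (Real.rpow_pos_of_pos ha0 d)) (ne_of_gt hΓa),
      Real.log_rpow ha0]
    linarith
  have := Real.exp_le_exp.mpr h2
  rwa [Real.exp_log hΓad, Real.exp_log (mul_pos (Real.rpow_pos_of_pos ha0 d) hΓa)] at this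

lemma psi_nonneg {d : ℝ} (hd0 : 0 < d) (j : ℕ) : 0 ≤ psi d j := by
  unfold psi
  have h1 : 0 < Real.Gamma ((j:ℝ) + d) := Real.Gamma_pos_of_pos (by positivity)
  have h2 : 0 < Real.Gamma d := Real.Gamma_pos_of_pos hd0
  have h3 : 0 < Real.Gamma ((j:ℝ) + 1) := Real.Gamma_pos_of_pos (by positivity)
  positivity

lemma psi_le {d : ℝ} (hd0 : 0 < d) (hd1 : d < 1) {n : ℕ} (hn : 1 ≤ n) :
    psi d n ≤ (n:ℝ) ^ (d - 1) / Real.Gamma d := by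
  have hn0 : (0:ℝ) < n := by exact_mod_cast hn
  have hn1 : (1:ℝ) ≤ n := by exact_mod_cast hn
  have hΓn : 0 < Real.Gamma (n:ℝ) := Real.Gamma_pos_of_pos hn0
  have hΓd : 0 < Real.Gamma d := Real.Gamma_pos_of_pos hd0
  have h1 : Real.Gamma ((n:ℝ) + 1) = n * Real.Gamma n := Real.Gamma_add_one (ne_of_gt hn0)
  have h2 : Real.Gamma ((n:ℝ) + d) ≤ (n:ℝ) ^ d * Real.Gamma n := gautschi hd0 hd1 hn1
  unfold psi
  rw [h1]
  calc Real.Gamma ((n:ℝ) + d) / (Real.Gamma d * ((n:ℝ) * Real.Gamma n))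
      ≤ ((n:ℝ) ^ d * Real.Gamma n) / (Real.Gamma d * ((n:ℝ) * Real.Gamma n)) := by
        gcongr
    _ = (n:ℝ) ^ (d - 1) / Real.Gamma d := by
        rw [Real.rpow_sub hn0, Real.rpow_one]
        field_simp

open Real Finset in
lemma sum_small {d : ℝ} (hd0 : 0 < d) (hd1 : d < 1) (j : ℕ) :
    ∑ i ∈ Finset.range j, ((i + 1 : ℕ) : ℝ) ^ (d - 1) ≤ (1 + 1 / d) * (j : ℝ) ^ d := by
  rcases Nat.eq_zero_or_pos j with hj | hj
  · subst hj; simp [Real.zero_rpow (ne_of_gt hd0)]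
  obtain ⟨n, rfl⟩ := Nat.exists_eq_add_of_le hj
  rw [add_comm 1 n]
  rw [Finset.sum_range_succ']
  have hanti : AntitoneOn (fun x : ℝ => x ^ (d - 1)) (Set.Icc (1:ℝ) (1 + n)) := by
    intro x hx y hy hxy
    exact Real.rpow_le_rpow_of_nonpos (lt_of_lt_of_le one_pos hx.1) hxy (by linarith)
  have hint := hanti.sum_le_integral
  have hcast : ∀ i : ℕ, ((i + 1 + 1 : ℕ) : ℝ) ^ (d - 1) = ((1:ℝ) + ((i + 1 : ℕ) : ℝ)) ^ (d - 1) := by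
    intro i; push_cast; ring_nf
  rw [show (∑ i ∈ Finset.range n, ((i + 1 + 1 : ℕ) : ℝ) ^ (d - 1))
      = ∑ i ∈ Finset.range n, ((1:ℝ) + ((i + 1 : ℕ) : ℝ)) ^ (d - 1) from
    Finset.sum_congr rfl fun i _ => hcast i]
  have hintval : (∫ x in (1:ℝ)..(1 + n), x ^ (d - 1))
      = ((1 + (n:ℝ)) ^ d - 1) / d := by
    rw [integral_rpow (Or.inl (by linarith))]
    rw [sub_add_cancel]
    simp [Real.one_rpow]
  have hj1 : (1:ℝ) ≤ ((n + 1 : ℕ) : ℝ) := by exact_mod_cast Nat.one_le_iff_ne_zero.mpr (Nat.succ_ne_zero n)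
  have hjd : (1:ℝ) ≤ ((n + 1 : ℕ) : ℝ) ^ d := by
    rw [show (1:ℝ) = 1 ^ d from (Real.one_rpow d).symm]
    exact Real.rpow_le_rpow zero_le_one hj1 hd0.le
  have heq : (1:ℝ) + (n:ℝ) = ((n + 1 : ℕ) : ℝ) := by push_cast; ring
  have h0 : ((0 + 1 : ℕ) : ℝ) ^ (d - 1) = 1 := by norm_num
  rw [h0, add_comm]
  calc 1 + ∑ i ∈ Finset.range n, ((1:ℝ) + ((i + 1 : ℕ):ℝ)) ^ (d - 1)
      ≤ 1 + (((1 + (n:ℝ)) ^ d - 1) / d) := by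
        refine (add_le_add_iff_left 1).2 ?_
        exact hint.trans_eq hintval
    _ ≤ ((n + 1 : ℕ) : ℝ) ^ d + ((n + 1 : ℕ) : ℝ) ^ d / d := by
        rw [heq, sub_div]
        have h1d : 0 < 1 / d := by positivity
        linarith
    _ = (1 + 1 / d) * ((n + 1 : ℕ) : ℝ) ^ d := by ring

open Real Finset in
lemma sum_tail {d : ℝ} (hd0 : 0 < d) (hd2 : d < 1 / 2) (m N : ℕ) (hm : 1 ≤ m) :
    ∑ k ∈ Finset.range N, ((m + k + 1 : ℕ) : ℝ) ^ (2 * d - 2)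
      ≤ (m : ℝ) ^ (2 * d - 1) / (1 - 2 * d) := by
  have hm0 : (0:ℝ) < m := by exact_mod_cast hm
  have hanti : AntitoneOn (fun x : ℝ => x ^ (2 * d - 2)) (Set.Icc (m:ℝ) ((m:ℝ) + N)) := by
    intro x hx y hy hxy
    exact Real.rpow_le_rpow_of_nonpos (lt_of_lt_of_le hm0 hx.1) hxy (by linarith)
  have hint := hanti.sum_le_integral
  have hcast : ∀ k : ℕ, ((m + k + 1 : ℕ) : ℝ) ^ (2 * d - 2)
      = ((m:ℝ) + ((k + 1 : ℕ) : ℝ)) ^ (2 * d - 2) := by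
    intro k; push_cast; ring_nf
  rw [show (∑ k ∈ Finset.range N, ((m + k + 1 : ℕ) : ℝ) ^ (2 * d - 2))
      = ∑ k ∈ Finset.range N, ((m:ℝ) + ((k + 1 : ℕ) : ℝ)) ^ (2 * d - 2) from
    Finset.sum_congr rfl fun k _ => hcast k]
  have h0 : (0:ℝ) ∉ Set.uIcc (m:ℝ) ((m:ℝ) + N) :=
    Set.notMem_uIcc_of_lt hm0 (by positivity)
  have hne : 2 * d - 2 ≠ -1 := by intro h; linarith
  have hintval : (∫ x in (m:ℝ)..((m:ℝ) + N), x ^ (2 * d - 2))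
      = (((m:ℝ) + N) ^ (2 * d - 1) - (m:ℝ) ^ (2 * d - 1)) / (2 * d - 1) := by
    rw [integral_rpow (Or.inr ⟨hne, h0⟩)]
    norm_num [show 2 * d - 2 + 1 = 2 * d - 1 by ring]
  refine hint.trans (hintval.trans_le ?_)
  have hA : (0:ℝ) < (m:ℝ) ^ (2 * d - 1) := Real.rpow_pos_of_pos hm0 _
  have hB : (0:ℝ) ≤ ((m:ℝ) + N) ^ (2 * d - 1) := Real.rpow_nonneg (by positivity) _
  have hc1 : (2 * d - 1 : ℝ) ≠ 0 := by intro h; linarith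
  have hc2 : (0:ℝ) < 1 - 2 * d := by linarith
  have heq : (((m:ℝ) + N) ^ (2 * d - 1) - (m:ℝ) ^ (2 * d - 1)) / (2 * d - 1)
      = ((m:ℝ) ^ (2 * d - 1) - ((m:ℝ) + N) ^ (2 * d - 1)) / (1 - 2 * d) := by
    rw [div_eq_div_iff hc1 (ne_of_gt hc2)]; ring
  rw [heq]
  gcongr
  linarith

open Real Finset in
theorem stmt16 (d : ℝ) (hd : 0 < d) (hd2 : d < 1 / 2) :
    ∃ C : ℝ, ∀ m L : ℕ, 1 ≤ m → m ≤ L →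
      ∑ j ∈ Finset.range (L + m),
          (∑ i ∈ Finset.range (min m j), psi d (j - i)) ^ 2
        ≤ C * (m : ℝ) ^ (2 * d + 1) := by
  have hd1 : d < 1 := by linarith
  have hΓd : 0 < Real.Gamma d := Real.Gamma_pos_of_pos hd
  set A : ℝ := (1 + 1 / d) / Real.Gamma d with hA
  have hA0 : 0 < A := by positivity
  set B : ℝ := 1 / ((1 - 2 * d) * Real.Gamma d ^ 2) with hB
  have h12d : (0:ℝ) < 1 - 2 * d := by linarith
  refine ⟨A ^ 2 * 2 ^ (2 * d + 1) + B, fun m L hm hmL => ?_⟩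
  have hm0 : (0:ℝ) < m := by exact_mod_cast hm
  -- nonnegativity of the inner sums
  have hp_nonneg : ∀ j : ℕ, 0 ≤ ∑ i ∈ Finset.range (min m j), psi d (j - i) :=
    fun j => Finset.sum_nonneg fun i _ => psi_nonneg hd _
  -- bound 1 : valid for all j
  have bound1 : ∀ j : ℕ, (∑ i ∈ Finset.range (min m j), psi d (j - i)) ≤ A * (j:ℝ) ^ d := by
    intro j
    calc ∑ i ∈ Finset.range (min m j), psi d (j - i)
        ≤ ∑ i ∈ Finset.range j, psi d (j - i) :=
          Finset.sum_le_sum_of_subset_of_nonneg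
            (Finset.range_subset_range.2 (min_le_right m j)) (fun i _ _ => psi_nonneg hd _)
      _ = ∑ i ∈ Finset.range j, psi d (i + 1) := by
          rw [← Finset.sum_range_reflect (fun i => psi d (i + 1)) j]
          refine Finset.sum_congr rfl fun i hi => ?_
          rw [Finset.mem_range] at hi
          congr 1
          omega
      _ ≤ ∑ i ∈ Finset.range j, ((i + 1 : ℕ) : ℝ) ^ (d - 1) / Real.Gamma d :=
          Finset.sum_le_sum fun i _ => psi_le hd hd1 (Nat.le_add_left 1 i)
      _ = (∑ i ∈ Finset.range j, ((i + 1 : ℕ) : ℝ) ^ (d - 1)) / Real.Gamma d := by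
          rw [Finset.sum_div]
      _ ≤ ((1 + 1 / d) * (j:ℝ) ^ d) / Real.Gamma d := by
          gcongr
          exact sum_small hd hd1 j
      _ = A * (j:ℝ) ^ d := by rw [hA]; ring
  -- bound 2 : valid for j ≥ 2m
  have bound2 : ∀ j : ℕ, 2 * m ≤ j →
      (∑ i ∈ Finset.range (min m j), psi d (j - i))
        ≤ (m:ℝ) * (((j - m + 1 : ℕ) : ℝ) ^ (d - 1) / Real.Gamma d) := by
    intro j hj
    have hmin : min m j = m := min_eq_left (by omega)
    rw [hmin]
    have key : ∀ i ∈ Finset.range m,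
        psi d (j - i) ≤ ((j - m + 1 : ℕ) : ℝ) ^ (d - 1) / Real.Gamma d := by
      intro i hi
      rw [Finset.mem_range] at hi
      have h1 : 1 ≤ j - i := by omega
      refine (psi_le hd hd1 h1).trans ?_
      refine div_le_div_of_nonneg_right ?_ hΓd.le |>.trans_eq rfl
      have hle : (j - m + 1 : ℕ) ≤ j - i := by omega
      have hx : (0:ℝ) < ((j - m + 1 : ℕ) : ℝ) := by
        have : 1 ≤ j - m + 1 := by omega
        exact_mod_cast Nat.lt_of_lt_of_le Nat.zero_lt_one this
      have hle' : ((j - m + 1 : ℕ) : ℝ) ≤ ((j - i : ℕ) : ℝ) := by exact_mod_cast hle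
      exact Real.rpow_le_rpow_of_nonpos hx hle' (by linarith)
    calc ∑ i ∈ Finset.range m, psi d (j - i)
        ≤ ∑ _i ∈ Finset.range m, ((j - m + 1 : ℕ) : ℝ) ^ (d - 1) / Real.Gamma d :=
          Finset.sum_le_sum key
      _ = (m:ℝ) * (((j - m + 1 : ℕ) : ℝ) ^ (d - 1) / Real.Gamma d) := by
          rw [Finset.sum_const, Finset.card_range, nsmul_eq_mul]
  -- split the sum
  have hsplit := (Finset.sum_Ico_consecutive
    (fun j => (∑ i ∈ Finset.range (min m j), psi d (j - i)) ^ 2)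
    (Nat.zero_le (2 * m)) (show 2 * m ≤ L + m by omega)).symm
  rw [← Finset.range_eq_Ico, ← Finset.range_eq_Ico] at hsplit
  rw [hsplit]
  -- part 1
  have hx2m : (0:ℝ) < 2 * (m:ℝ) := by positivity
  have part1 : (∑ j ∈ Finset.range (2 * m),
        (∑ i ∈ Finset.range (min m j), psi d (j - i)) ^ 2)
      ≤ A ^ 2 * 2 ^ (2 * d + 1) * (m:ℝ) ^ (2 * d + 1) := by
    have step : ∀ j ∈ Finset.range (2 * m),
        (∑ i ∈ Finset.range (min m j), psi d (j - i)) ^ 2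
          ≤ (A * (2 * (m:ℝ)) ^ d) ^ 2 := by
      intro j hj
      rw [Finset.mem_range] at hj
      have h1 : (∑ i ∈ Finset.range (min m j), psi d (j - i)) ≤ A * (2 * (m:ℝ)) ^ d := by
        refine (bound1 j).trans ?_
        have : ((j:ℝ)) ^ d ≤ (2 * (m:ℝ)) ^ d := by
          apply Real.rpow_le_rpow (Nat.cast_nonneg j) _ hd.le
          have : (j:ℝ) ≤ ((2 * m : ℕ) : ℝ) := by exact_mod_cast hj.le
          simpa [Nat.cast_mul] using this
        nlinarith [Real.rpow_pos_of_pos hx2m d]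
      exact pow_le_pow_left₀ (hp_nonneg j) h1 2
    calc (∑ j ∈ Finset.range (2 * m),
          (∑ i ∈ Finset.range (min m j), psi d (j - i)) ^ 2)
        ≤ ∑ _j ∈ Finset.range (2 * m), (A * (2 * (m:ℝ)) ^ d) ^ 2 :=
          Finset.sum_le_sum step
      _ = (2 * (m:ℝ)) * (A * (2 * (m:ℝ)) ^ d) ^ 2 := by
          rw [Finset.sum_const, Finset.card_range, nsmul_eq_mul]
          push_cast
          ring
      _ = A ^ 2 * 2 ^ (2 * d + 1) * (m:ℝ) ^ (2 * d + 1) := by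
          rw [mul_pow]
          have e1 : ((2 * (m:ℝ)) ^ d) ^ 2 = (2 * (m:ℝ)) ^ (2 * d) := by
            rw [← Real.rpow_natCast ((2 * (m:ℝ)) ^ d) 2, ← Real.rpow_mul hx2m.le]
            norm_num [mul_comm]
          rw [e1]
          have e2 : (2 * (m:ℝ)) * (2 * (m:ℝ)) ^ (2 * d) = (2 * (m:ℝ)) ^ (2 * d + 1) := by
            rw [Real.rpow_add_one (ne_of_gt hx2m)]
            ring
          have e3 : (2 * (m:ℝ)) ^ (2 * d + 1)
              = 2 ^ (2 * d + 1) * (m:ℝ) ^ (2 * d + 1) :=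
            Real.mul_rpow (by norm_num) (Nat.cast_nonneg m)
          calc (2 * (m:ℝ)) * (A ^ 2 * ((2 * (m:ℝ)) ^ (2 * d)))
              = A ^ 2 * ((2 * (m:ℝ)) * (2 * (m:ℝ)) ^ (2 * d)) := by ring
            _ = A ^ 2 * (2 ^ (2 * d + 1) * (m:ℝ) ^ (2 * d + 1)) := by rw [e2, e3]
            _ = A ^ 2 * 2 ^ (2 * d + 1) * (m:ℝ) ^ (2 * d + 1) := by ring
  -- part 2
  have part2 : (∑ j ∈ Finset.Ico (2 * m) (L + m),
        (∑ i ∈ Finset.range (min m j), psi d (j - i)) ^ 2)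
      ≤ B * (m:ℝ) ^ (2 * d + 1) := by
    have step : ∀ j ∈ Finset.Ico (2 * m) (L + m),
        (∑ i ∈ Finset.range (min m j), psi d (j - i)) ^ 2
          ≤ (m:ℝ) ^ 2 / Real.Gamma d ^ 2 * ((j - m + 1 : ℕ) : ℝ) ^ (2 * d - 2) := by
      intro j hj
      rw [Finset.mem_Ico] at hj
      have hjm : 2 * m ≤ j := hj.1
      have h1 := bound2 j hjm
      have hxpos : (0:ℝ) < ((j - m + 1 : ℕ) : ℝ) := by
        have : 1 ≤ j - m + 1 := by omega
        exact_mod_cast Nat.lt_of_lt_of_le Nat.zero_lt_one this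
      have h2 := pow_le_pow_left₀ (hp_nonneg j) h1 2
      refine h2.trans_eq ?_
      rw [mul_pow, div_pow]
      have e1 : (((j - m + 1 : ℕ) : ℝ) ^ (d - 1)) ^ 2
          = ((j - m + 1 : ℕ) : ℝ) ^ (2 * d - 2) := by
        rw [← Real.rpow_natCast (((j - m + 1 : ℕ) : ℝ) ^ (d - 1)) 2,
          ← Real.rpow_mul hxpos.le]
        norm_num
        ring_nf
      rw [e1]
      ring
    calc (∑ j ∈ Finset.Ico (2 * m) (L + m),
          (∑ i ∈ Finset.range (min m j), psi d (j - i)) ^ 2)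
        ≤ ∑ j ∈ Finset.Ico (2 * m) (L + m),
            (m:ℝ) ^ 2 / Real.Gamma d ^ 2 * ((j - m + 1 : ℕ) : ℝ) ^ (2 * d - 2) :=
          Finset.sum_le_sum step
      _ = (m:ℝ) ^ 2 / Real.Gamma d ^ 2
            * ∑ j ∈ Finset.Ico (2 * m) (L + m), ((j - m + 1 : ℕ) : ℝ) ^ (2 * d - 2) := by
          rw [Finset.mul_sum]
      _ ≤ (m:ℝ) ^ 2 / Real.Gamma d ^ 2 * ((m:ℝ) ^ (2 * d - 1) / (1 - 2 * d)) := by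
          gcongr
          rw [Finset.sum_Ico_eq_sum_range]
          have : ∀ k ∈ Finset.range (L + m - 2 * m),
              ((2 * m + k - m + 1 : ℕ) : ℝ) ^ (2 * d - 2)
                = ((m + k + 1 : ℕ) : ℝ) ^ (2 * d - 2) := by
            intro k _
            congr 2
            omega
          rw [Finset.sum_congr rfl this]
          exact sum_tail hd hd2 m _ hm
      _ = B * (m:ℝ) ^ (2 * d + 1) := by
          have e1 : ((m:ℝ)) ^ (2:ℕ) = (m:ℝ) ^ ((2:ℕ) : ℝ) := (Real.rpow_natCast _ 2).symm
          have e2 : (m:ℝ) ^ ((2:ℕ):ℝ) * (m:ℝ) ^ (2 * d - 1) = (m:ℝ) ^ (2 * d + 1) := by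
            rw [← Real.rpow_add hm0]
            norm_num
            ring_nf
          rw [hB]
          field_simp
          rw [← e2, ← e1]
  calc (∑ j ∈ Finset.range (2 * m),
          (∑ i ∈ Finset.range (min m j), psi d (j - i)) ^ 2)
        + ∑ j ∈ Finset.Ico (2 * m) (L + m),
            (∑ i ∈ Finset.range (min m j), psi d (j - i)) ^ 2
      ≤ A ^ 2 * 2 ^ (2 * d + 1) * (m:ℝ) ^ (2 * d + 1) + B * (m:ℝ) ^ (2 * d + 1) :=
        add_le_add part1 part2
    _ = (A ^ 2 * 2 ^ (2 * d + 1) + B) * (m:ℝ) ^ (2 * d + 1) := by ring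
end
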